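/- arXiv:1909.01909 — 15 statements merged into one kernel-verified Lean document; each statement's English description precedes it below -/
import Mathlib

section
/- Let G be a symmetric n×n matrix with rational entries and let H ∈ ℤ^n be such that HᵀGH > 0 and such that the quadratic form x ↦ xᵀGx is negative definite on the real orthogonal complement {x ∈ ℝ^n : HᵀGx = 0} of H. Then for every pair of integers d, k, the set {D ∈ ℤ^n : DᵀGD = d and HᵀGD = k} is finite. -/
open Matrix

private lemma cast_dot (n : ℕ) (G : Matrix (Fin n) (Fin n) ℚ) (v w : Fin n → ℚ) :
    ((v ⬝ᵥ (G *ᵥ w) : ℚ) : ℝ)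
      = (fun i => (v i : ℝ)) ⬝ᵥ ((G.map ((↑) : ℚ → ℝ)) *ᵥ fun i => (w i : ℝ)) := by
  have h1 := (Rat.castHom ℝ).map_dotProduct v (G *ᵥ w)
  have h2 : ⇑(Rat.castHom ℝ) ∘ (G *ᵥ w) = (G.map Rat.cast) *ᵥ (⇑(Rat.castHom ℝ) ∘ w) :=
    funext fun i => (Rat.castHom ℝ).map_mulVec G w i
  rw [h2] at h1
  exact h1

/-- Finiteness underlying Shimada's algorithm: if `H` has positive square for the
symmetric rational matrix `G` and the form is negative definite on the real
orthogonal complement of `H`, then for all integers `d, k` there are only finitely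
many integral vectors `D` with `DᵀGD = d` and `HᵀGD = k`. -/
theorem stmt_2 (n : ℕ) (G : Matrix (Fin n) (Fin n) ℚ) (hG : G.IsSymm)
    (H : Fin n → ℤ)
    (hH : 0 < (fun i => (H i : ℚ)) ⬝ᵥ (G *ᵥ fun i => (H i : ℚ)))
    (hneg : ∀ x : Fin n → ℝ, x ≠ 0 →
      (fun i => (H i : ℝ)) ⬝ᵥ ((G.map ((↑) : ℚ → ℝ)) *ᵥ x) = 0 →
      x ⬝ᵥ ((G.map ((↑) : ℚ → ℝ)) *ᵥ x) < 0)
    (d k : ℤ) :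
    {D : Fin n → ℤ |
      (fun i => (D i : ℚ)) ⬝ᵥ (G *ᵥ fun i => (D i : ℚ)) = (d : ℚ) ∧
      (fun i => (H i : ℚ)) ⬝ᵥ (G *ᵥ fun i => (D i : ℚ)) = (k : ℚ)}.Finite := by
  rcases Nat.eq_zero_or_pos n with h0 | hn
  · subst h0
    simp [dotProduct] at hH
  haveI : NeZero n := ⟨hn.ne'⟩
  set Gr : Matrix (Fin n) (Fin n) ℝ := G.map ((↑) : ℚ → ℝ) with hGr_def
  set Hr : Fin n → ℝ := fun i => (H i : ℝ) with hHr_def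
  have hGr : Grᵀ = Gr := by
    rw [hGr_def, ← Matrix.transpose_map, hG.eq]
  -- symmetry of the bilinear form
  have hsymm : ∀ v w : Fin n → ℝ, v ⬝ᵥ (Gr *ᵥ w) = w ⬝ᵥ (Gr *ᵥ v) := by
    intro v w
    calc v ⬝ᵥ (Gr *ᵥ w) = (v ᵥ* Gr) ⬝ᵥ w := dotProduct_mulVec v Gr w
      _ = (v ᵥ* Grᵀ) ⬝ᵥ w := by rw [hGr]
      _ = (Gr *ᵥ v) ⬝ᵥ w := by rw [vecMul_transpose]
      _ = w ⬝ᵥ (Gr *ᵥ v) := dotProduct_comm _ _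
  set h : ℝ := Hr ⬝ᵥ (Gr *ᵥ Hr) with hh_def
  have hcastH : h = (((fun i => (H i : ℚ)) ⬝ᵥ (G *ᵥ fun i => (H i : ℚ)) : ℚ) : ℝ) := by
    rw [cast_dot]; rfl
  have hpos : 0 < h := by rw [hcastH]; exact_mod_cast hH
  have hne : h ≠ 0 := hpos.ne'
  -- the auxiliary positive definite quadratic form
  set f : (Fin n → ℝ) → ℝ := fun x => 2 * (Hr ⬝ᵥ (Gr *ᵥ x))^2 / h - x ⬝ᵥ (Gr *ᵥ x) with hf_def
  have hfpos : ∀ x : Fin n → ℝ, x ≠ 0 → 0 < f x := by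
    intro x hx
    set t : ℝ := (Hr ⬝ᵥ (Gr *ᵥ x)) / h with ht_def
    set w : Fin n → ℝ := x - t • Hr with hw_def
    have hxw : x = t • Hr + w := by rw [hw_def]; abel
    have hHw : Hr ⬝ᵥ (Gr *ᵥ w) = 0 := by
      rw [hw_def, mulVec_sub, dotProduct_sub, mulVec_smul, dotProduct_smul, smul_eq_mul]
      rw [← hh_def, ht_def]
      field_simp
      ring
    have hHx : Hr ⬝ᵥ (Gr *ᵥ x) = t * h := by
      rw [hxw, mulVec_add, dotProduct_add, mulVec_smul, dotProduct_smul, smul_eq_mul,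
        ← hh_def, hHw]; ring
    have hxx : x ⬝ᵥ (Gr *ᵥ x) = t^2 * h + w ⬝ᵥ (Gr *ᵥ w) := by
      have h1 : w ⬝ᵥ (Gr *ᵥ Hr) = 0 := by rw [hsymm]; exact hHw
      rw [hxw]
      simp only [mulVec_add, dotProduct_add, add_dotProduct, mulVec_smul, dotProduct_smul,
        smul_dotProduct, smul_eq_mul, ← hh_def, hHw, h1]
      ring
    have hfx : f x = t^2 * h - w ⬝ᵥ (Gr *ᵥ w) := by
      rw [hf_def]
      simp only
      rw [hHx, hxx]
      field_simp
      ring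
    rw [hfx]
    by_cases hw : w = 0
    · have hxt : x = t • Hr := by rw [hxw, hw, add_zero]
      have ht : t ≠ 0 := by
        intro h0
        apply hx
        rw [hxt, h0, zero_smul]
      rw [hw]
      simp only [mulVec_zero, dotProduct_zero, sub_zero]
      positivity
    · have := hneg w hw hHw
      nlinarith [sq_nonneg t]
  -- continuity
  have hfc : Continuous f := by
    apply Continuous.sub
    · apply Continuous.div_const
      apply Continuous.mul continuous_const
      apply Continuous.pow
      exact (continuous_const.dotProduct (continuous_const.matrix_mulVec continuous_id))
    · exact continuous_id.dotProduct (continuous_const.matrix_mulVec continuous_id)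
  -- minimum on the unit sphere
  have hsph : (Metric.sphere (0 : Fin n → ℝ) 1).Nonempty :=
    NormedSpace.sphere_nonempty.mpr zero_le_one
  obtain ⟨u, hu, humin⟩ := (isCompact_sphere (0 : Fin n → ℝ) 1).exists_isMinOn hsph hfc.continuousOn
  set ε : ℝ := f u with hε_def
  have hunorm : ‖u‖ = 1 := by simpa using hu
  have hεpos : 0 < ε := hfpos u (by intro h0; rw [h0] at hunorm; simp at hunorm)
  -- homogeneity
  have hfhom : ∀ (c : ℝ) (x : Fin n → ℝ), f (c • x) = c^2 * f x := by
    intro c x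
    rw [hf_def]
    simp only [mulVec_smul, dotProduct_smul, smul_dotProduct, smul_eq_mul]
    field_simp
  -- the quadratic bound
  have hbound : ∀ x : Fin n → ℝ, ε * ‖x‖^2 ≤ f x := by
    intro x
    by_cases hx : x = 0
    · subst hx
      simp [hf_def]
    · have hnx : (0:ℝ) < ‖x‖ := norm_pos_iff.mpr hx
      have hux : x = ‖x‖ • (‖x‖⁻¹ • x) := by
        rw [smul_smul, mul_inv_cancel₀ hnx.ne', one_smul]
      have hmem : ‖x‖⁻¹ • x ∈ Metric.sphere (0 : Fin n → ℝ) 1 := by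
        simp [norm_smul, abs_of_pos (inv_pos.mpr hnx), inv_mul_cancel₀ hnx.ne']
      have hmin := humin hmem
      have heq : f x = ‖x‖^2 * f (‖x‖⁻¹ • x) := by
        conv_lhs => rw [hux]
        rw [hfhom]
      have hmin' : ε ≤ f (‖x‖⁻¹ • x) := hmin
      rw [heq, mul_comm]
      exact mul_le_mul_of_nonneg_left hmin' (sq_nonneg _)
  -- the value of f on elements of the set
  set C : ℝ := max (2 * (k:ℝ)^2 / h - (d:ℝ)) 0 with hC_def
  set R : ℝ := Real.sqrt (C / ε) with hR_def
  have key : ∀ D : Fin n → ℤ,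
      ((fun i => (D i : ℚ)) ⬝ᵥ (G *ᵥ fun i => (D i : ℚ)) = (d : ℚ) ∧
       (fun i => (H i : ℚ)) ⬝ᵥ (G *ᵥ fun i => (D i : ℚ)) = (k : ℚ)) →
      ∀ i, D i ∈ Set.Icc (-⌈R⌉) ⌈R⌉ := by
    intro D ⟨hD1, hD2⟩ i
    set Dr : Fin n → ℝ := fun i => ((D i : ℚ) : ℝ) with hDr_def
    have hv1 : Dr ⬝ᵥ (Gr *ᵥ Dr) = (d : ℝ) := by
      rw [hDr_def, hGr_def, ← cast_dot, hD1]
      norm_cast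
    have hv2 : Hr ⬝ᵥ (Gr *ᵥ Dr) = (k : ℝ) := by
      have hc := cast_dot n G (fun i => (H i : ℚ)) (fun i => (D i : ℚ))
      rw [hD2] at hc
      have hHc : Hr = fun i => (((H i : ℚ)) : ℝ) := by funext i; norm_cast
      rw [hHc, hDr_def, hGr_def, ← hc]
      norm_cast
    have hfD : f Dr = 2 * (k:ℝ)^2 / h - (d:ℝ) := by
      rw [hf_def]; simp only; rw [hv1, hv2]
    have h1 : ε * ‖Dr‖^2 ≤ C := by
      calc ε * ‖Dr‖^2 ≤ f Dr := hbound Dr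
        _ ≤ C := by rw [hfD, hC_def]; exact le_max_left _ _
    have hC0 : 0 ≤ C := le_max_right _ _
    have h2 : ‖Dr‖^2 ≤ C / ε := by
      rw [le_div_iff₀ hεpos]
      linarith [h1]
    have h3 : ‖Dr‖ ≤ R := by
      rw [hR_def]
      exact (Real.le_sqrt (norm_nonneg Dr) (by positivity)).mpr h2
    have h4 : |(D i : ℝ)| ≤ R := by
      have := norm_le_pi_norm Dr i
      rw [hDr_def] at this
      simp only [Real.norm_eq_abs] at this
      calc |(D i : ℝ)| = |((D i : ℚ) : ℝ)| := by push_cast; rfl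
        _ ≤ ‖Dr‖ := this
        _ ≤ R := h3
    rw [abs_le] at h4
    constructor
    · have : -R ≤ (D i : ℝ) := h4.1
      have hRceil : ((-⌈R⌉ : ℤ) : ℝ) ≤ (D i : ℝ) := by
        push_cast
        calc (-(⌈R⌉:ℝ)) ≤ -R := by linarith [Int.le_ceil R]
          _ ≤ (D i : ℝ) := h4.1
      exact_mod_cast hRceil
    · have hRceil : ((D i : ℤ) : ℝ) ≤ ((⌈R⌉ : ℤ) : ℝ) := by
        calc ((D i : ℤ) : ℝ) ≤ R := h4.2
          _ ≤ (⌈R⌉ : ℝ) := Int.le_ceil R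
      exact_mod_cast hRceil
  apply Set.Finite.subset (Set.Finite.pi (fun _ : Fin n => Set.finite_Icc (-⌈R⌉) ⌈R⌉))
  intro D hD
  intro i _
  exact key D hD i
end

section
/- Equip ℤ³ with the bilinear form x·y = xᵀGy, where G = [[−2,0,4],[0,−2,0],[4,0,−2]]. Let A₁=(1,0,0), A₂=(0,1,0), A₃=(0,0,1), A₄=(1,−2,2), A₅=(2,−3,2), A₆=(2,−2,1). Then D = (1,−1,1) satisfies D·D = 2 and D·Aᵢ = 2 for all i ∈ {1,…,6}, and D is the unique vector of ℤ³ with D·D = 2 and D·Aᵢ ≥ 0 for all i ∈ {1,…,6}. -/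
open Matrix

/-- On the lattice `S₁` with Gram matrix `G`, the class `D = (1,−1,1)` is the
unique big and nef class of square `2`, and it meets each of the six
`(−2)`-curves `A₁,…,A₆` with multiplicity `2`. -/
theorem stmt_4 :
    let G : Matrix (Fin 3) (Fin 3) ℤ := !![-2, 0, 4; 0, -2, 0; 4, 0, -2]
    let A : Fin 6 → Fin 3 → ℤ :=
      ![![1, 0, 0], ![0, 1, 0], ![0, 0, 1], ![1, -2, 2], ![2, -3, 2], ![2, -2, 1]]
    let D : Fin 3 → ℤ := ![1, -1, 1]
    D ⬝ᵥ (G *ᵥ D) = 2 ∧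
    (∀ i : Fin 6, D ⬝ᵥ (G *ᵥ A i) = 2) ∧
    (∀ E : Fin 3 → ℤ, E ⬝ᵥ (G *ᵥ E) = 2 → (∀ i : Fin 6, 0 ≤ E ⬝ᵥ (G *ᵥ A i)) →
      E = D) := by
  intro G A D
  refine ⟨by decide, by decide, ?_⟩
  intro E hQ hA
  set a := E 0 with ha
  set b := E 1 with hb
  set c := E 2 with hc
  have h1 := hA 0
  have h2 := hA 1
  have h3 := hA 2
  have h4 := hA 3
  have h5 := hA 4
  have h6 := hA 5
  rw [show A 5 = ![2, -2, 1] from rfl] at h6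
  rw [show A 4 = ![2, -3, 2] from rfl] at h5
  rw [show A 3 = ![1, -2, 2] from rfl] at h4
  simp [G, A, dotProduct, mulVec, Fin.sum_univ_three, ← ha, ← hb, ← hc]
    at hQ h1 h2 h3 h4 h5 h6
  -- hQ : -2a² - 2b² - 2c² + 8ac = 2 (in some arrangement)
  have hb0 : b ≤ 0 := by linarith
  have ha0 : 0 ≤ a := by linarith
  have hc0 : 0 ≤ c := by linarith
  have ha1 : 1 ≤ a := by nlinarith [sq_nonneg (a - c), sq_nonneg b, sq_nonneg c]
  have hc1 : 1 ≤ c := by nlinarith [sq_nonneg (a - c), sq_nonneg b, sq_nonneg a]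
  have hQ' : a * a + b * b + c * c - 4 * a * c + 1 = 0 := by nlinarith [hQ]
  have hc3 : c ≤ 3 := by
    by_contra hcon
    push_neg at hcon
    have p0 : (0:ℤ) ≤ c - 4 := by omega
    have p1 : (0:ℤ) ≤ 2 * c - a := by linarith
    have p2 : (0:ℤ) ≤ 2 * a - c := by linarith
    have p3 : (0:ℤ) ≤ -b := by linarith
    have p4 : (0:ℤ) ≤ 3 * a + 2 * b := by linarith
    have p5 : (0:ℤ) ≤ 2 * a + 3 * b + 2 * c := by linarith
    have p6 : (0:ℤ) ≤ 3 * c + 2 * b := by linarith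
    have hQc : c * (a * a + b * b + c * c - 4 * a * c + 1) = 0 := by
      rw [hQ']; ring
    nlinarith [mul_nonneg (mul_nonneg p0 p2) p6, mul_nonneg p2 p5,
      mul_nonneg (mul_nonneg p1 p2) p5, mul_nonneg p0 p4,
      mul_nonneg (mul_nonneg p1 p3) p5, mul_nonneg (mul_nonneg p0 p1) p2,
      mul_nonneg (mul_nonneg p0 p2) p5, mul_nonneg (mul_nonneg p0 p0) p6,
      mul_nonneg p0 p1, mul_nonneg (mul_nonneg p0 p1) p3,
      mul_nonneg (mul_nonneg p1 p1) p4, p0, mul_nonneg p2 p6,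
      mul_nonneg (mul_nonneg p1 p3) p4, mul_nonneg (mul_nonneg p3 p4) p6,
      mul_nonneg (mul_nonneg p3 p3) p5, mul_nonneg (mul_nonneg p2 p2) p6, hQc]
  have ha6 : a ≤ 6 := by linarith
  have hb4 : -4 ≤ b := by linarith
  have hE : a = 1 ∧ b = -1 ∧ c = 1 := by
    interval_cases a <;> interval_cases c <;> interval_cases b <;> omega
  funext i
  fin_cases i <;> simp [D, ← ha, ← hb, ← hc, hE.1, hE.2.1, hE.2.2]
end

section
/- Equip ℤ³ with the bilinear form x·y = xᵀGy, where G = [[−2,1,7],[1,−2,1],[7,1,−2]]. Let A₁=(1,0,0), A₂=(0,1,0), A₃=(0,0,1), A₄=(1,−2,2), A₅=(2,−3,2), A₆=(2,−2,1). Then D = (1,−1,1) satisfies D·D = 4 and D·Aᵢ = 4 for all i ∈ {1,…,6}; D is the unique vector of ℤ³ with D·D = 4 and D·Aᵢ ≥ 0 for all i; and there is no vector D' ∈ ℤ³ with 0 < D'·D' < 4 and D'·Aᵢ ≥ 0 for all i ∈ {1,…,6}. -/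
open Matrix

set_option maxHeartbeats 2000000 in
private theorem stmt5_xbound (x y z : ℤ)
    (h1 : 0 ≤ -2*x+y+7*z) (h2 : 0 ≤ x-2*y+z) (h3 : 0 ≤ 7*x+y-2*z)
    (h4 : 0 ≤ 10*x+7*y+z) (h5 : 0 ≤ 7*x+10*y+7*z) (h6 : 0 ≤ x+7*y+10*z)
    (hq4 : -2*x*x-2*y*y-2*z*z+2*x*y+2*y*z+14*x*z ≤ 4) :
    x ≤ 5 := by
  nlinarith [mul_nonneg h5 h6, mul_nonneg h1 h3, mul_nonneg h5 h5, mul_nonneg h6 h6,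
    mul_nonneg h2 h5, mul_nonneg h2 h6, sq_nonneg (x-z), sq_nonneg (x+z)]

set_option maxHeartbeats 4000000 in
private theorem stmt5_key (x y z : ℤ)
    (h1 : 0 ≤ -2*x+y+7*z) (h2 : 0 ≤ x-2*y+z) (h3 : 0 ≤ 7*x+y-2*z)
    (h4 : 0 ≤ 10*x+7*y+z) (h5 : 0 ≤ 7*x+10*y+7*z) (h6 : 0 ≤ x+7*y+10*z)
    (hq0 : 0 < -2*x*x-2*y*y-2*z*z+2*x*y+2*y*z+14*x*z)
    (hq4 : -2*x*x-2*y*y-2*z*z+2*x*y+2*y*z+14*x*z ≤ 4) :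
    x = 1 ∧ y = -1 ∧ z = 1 := by
  have hx0 : 0 ≤ x := by linarith
  have hz0 : 0 ≤ z := by linarith
  have hx5 : x ≤ 5 := stmt5_xbound x y z h1 h2 h3 h4 h5 h6 hq4
  have hz5 : z ≤ 5 := stmt5_xbound z y x (by linarith) (by linarith) (by linarith)
    (by linarith) (by linarith) (by linarith) (by linarith)
  have hy1 : -7 ≤ y := by linarith
  have hy2 : y ≤ 5 := by linarith
  interval_cases x <;> interval_cases z <;> interval_cases y <;> omega

/-- On the lattice `S₂` with Gram matrix `G`, the class `D = (1,−1,1)` has square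
`4`, meets each of the six `(−2)`-curves with multiplicity `4`, is the unique such
class of square `4` meeting all the `(−2)`-curves nonnegatively, and there is no
big and nef class of square strictly between `0` and `4`. -/
theorem stmt_5 :
    let G : Matrix (Fin 3) (Fin 3) ℤ := !![-2, 1, 7; 1, -2, 1; 7, 1, -2]
    let A : Fin 6 → Fin 3 → ℤ :=
      ![![1, 0, 0], ![0, 1, 0], ![0, 0, 1], ![1, -2, 2], ![2, -3, 2], ![2, -2, 1]]
    let D : Fin 3 → ℤ := ![1, -1, 1]
    D ⬝ᵥ (G *ᵥ D) = 4 ∧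
    (∀ i : Fin 6, D ⬝ᵥ (G *ᵥ A i) = 4) ∧
    (∀ E : Fin 3 → ℤ, E ⬝ᵥ (G *ᵥ E) = 4 → (∀ i : Fin 6, 0 ≤ E ⬝ᵥ (G *ᵥ A i)) →
      E = D) ∧
    (¬ ∃ D' : Fin 3 → ℤ, 0 < D' ⬝ᵥ (G *ᵥ D') ∧ D' ⬝ᵥ (G *ᵥ D') < 4 ∧
      ∀ i : Fin 6, 0 ≤ D' ⬝ᵥ (G *ᵥ A i)) := by
  intro G A D
  have hGA0 : G *ᵥ A 0 = ![-2, 1, 7] := by decide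
  have hGA1 : G *ᵥ A 1 = ![1, -2, 1] := by decide
  have hGA2 : G *ᵥ A 2 = ![7, 1, -2] := by decide
  have hGA3 : G *ᵥ A 3 = ![10, 7, 1] := by decide
  have hGA4 : G *ᵥ A 4 = ![7, 10, 7] := by decide
  have hGA5 : G *ᵥ A 5 = ![1, 7, 10] := by decide
  refine ⟨by decide, by decide, ?_, ?_⟩
  · intro E hQ h
    have h1 := h 0; rw [hGA0] at h1
    have h2 := h 1; rw [hGA1] at h2
    have h3 := h 2; rw [hGA2] at h3
    have h4 := h 3; rw [hGA3] at h4
    have h5 := h 4; rw [hGA4] at h5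
    have h6 := h 5; rw [hGA5] at h6
    simp [G, dotProduct, Matrix.mulVec, Fin.sum_univ_three] at hQ h1 h2 h3 h4 h5 h6
    obtain ⟨hx, hy, hz⟩ := stmt5_key (E 0) (E 1) (E 2)
      (by linarith) (by linarith) (by linarith) (by linarith) (by linarith) (by linarith)
      (by nlinarith) (by nlinarith)
    funext i
    fin_cases i
    · simpa [D] using hx
    · simpa [D] using hy
    · simpa [D] using hz
  · rintro ⟨E, hQ0, hQ4, h⟩
    have h1 := h 0; rw [hGA0] at h1
    have h2 := h 1; rw [hGA1] at h2
    have h3 := h 2; rw [hGA2] at h3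
    have h4 := h 3; rw [hGA3] at h4
    have h5 := h 4; rw [hGA4] at h5
    have h6 := h 5; rw [hGA5] at h6
    simp [G, dotProduct, Matrix.mulVec, Fin.sum_univ_three] at hQ0 hQ4 h1 h2 h3 h4 h5 h6
    obtain ⟨hx, hy, hz⟩ := stmt5_key (E 0) (E 1) (E 2)
      (by linarith) (by linarith) (by linarith) (by linarith) (by linarith) (by linarith)
      (by nlinarith) (by nlinarith)
    rw [hx, hy, hz] at hQ4
    norm_num at hQ4
end

section
/- Equip ℤ³ with the bilinear form x·y = xᵀGy, where G = [[−2,1,7],[1,−2,1],[7,1,−2]], and let A₁=(1,0,0), A₂=(0,1,0), A₃=(0,0,1), A₄=(1,−2,2), A₅=(2,−3,2), A₆=(2,−2,1). For an integer s > 0 let N(s) be the number of vectors D ∈ ℤ³ with D·D = s and D·Aᵢ ≥ 0 for all i ∈ {1,…,6}. Then N(4) = 1, N(10) = 6, N(12) = 6, N(16) = 1, N(18) = 6, N(22) = 12, and N(s) = 0 for every other integer s with 0 < s ≤ 22. -/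
set_option maxRecDepth 8000

open Matrix

private def sols : Finset (ℤ × ℤ × ℤ) :=
  {(1,-1,1),
   (1,-1,2),(1,0,1),(2,-3,3),(2,-1,1),(3,-4,3),(3,-3,2),
   (1,-1,3),(1,1,1),(3,-5,5),(3,-1,1),(5,-7,5),(5,-5,3),
   (2,-2,2),
   (1,0,2),(2,-3,4),(2,0,1),(4,-6,5),(4,-3,2),(5,-6,4),
   (1,0,3),(1,1,2),(2,-3,5),(2,1,1),(3,-5,6),(3,0,1),(5,-8,7),(5,-3,2),(6,-9,7),(6,-5,3),(7,-9,6),(7,-8,5)}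

private def qf (p : ℤ × ℤ × ℤ) : ℤ :=
  -2*p.1*p.1 - 2*p.2.1*p.2.1 - 2*p.2.2*p.2.2 + 2*p.1*p.2.1 + 14*p.1*p.2.2 + 2*p.2.1*p.2.2

private def cnd (p : ℤ × ℤ × ℤ) : Prop :=
  0 ≤ -2*p.1 + p.2.1 + 7*p.2.2 ∧ 0 ≤ p.1 - 2*p.2.1 + p.2.2 ∧ 0 ≤ 7*p.1 + p.2.1 - 2*p.2.2 ∧
  0 ≤ 10*p.1 + 7*p.2.1 + p.2.2 ∧ 0 ≤ 7*p.1 + 10*p.2.1 + 7*p.2.2 ∧ 0 ≤ p.1 + 7*p.2.1 + 10*p.2.2 ∧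
  0 < qf p ∧ qf p ≤ 22

private instance : DecidablePred cnd := fun p => by unfold cnd; infer_instance

private lemma aux0 : ∀ x ∈ (Finset.Icc (-16:ℤ) 3) ×ˢ (Finset.Icc (0:ℤ) 13),
    cnd (0, x.1, x.2) → (0, x.1, x.2) ∈ sols := by decide
private lemma aux1 : ∀ x ∈ (Finset.Icc (-16:ℤ) 3) ×ˢ (Finset.Icc (0:ℤ) 13),
    cnd (1, x.1, x.2) → (1, x.1, x.2) ∈ sols := by decide
private lemma aux2 : ∀ x ∈ (Finset.Icc (-16:ℤ) 3) ×ˢ (Finset.Icc (0:ℤ) 13),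
    cnd (2, x.1, x.2) → (2, x.1, x.2) ∈ sols := by decide
private lemma aux3 : ∀ x ∈ (Finset.Icc (-16:ℤ) 3) ×ˢ (Finset.Icc (0:ℤ) 13),
    cnd (3, x.1, x.2) → (3, x.1, x.2) ∈ sols := by decide
private lemma aux4 : ∀ x ∈ (Finset.Icc (-16:ℤ) 3) ×ˢ (Finset.Icc (0:ℤ) 13),
    cnd (4, x.1, x.2) → (4, x.1, x.2) ∈ sols := by decide
private lemma aux5 : ∀ x ∈ (Finset.Icc (-16:ℤ) 3) ×ˢ (Finset.Icc (0:ℤ) 13),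
    cnd (5, x.1, x.2) → (5, x.1, x.2) ∈ sols := by decide
private lemma aux6 : ∀ x ∈ (Finset.Icc (-16:ℤ) 3) ×ˢ (Finset.Icc (0:ℤ) 13),
    cnd (6, x.1, x.2) → (6, x.1, x.2) ∈ sols := by decide
private lemma aux7 : ∀ x ∈ (Finset.Icc (-16:ℤ) 3) ×ˢ (Finset.Icc (0:ℤ) 13),
    cnd (7, x.1, x.2) → (7, x.1, x.2) ∈ sols := by decide
private lemma aux8 : ∀ x ∈ (Finset.Icc (-16:ℤ) 3) ×ˢ (Finset.Icc (0:ℤ) 13),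
    cnd (8, x.1, x.2) → (8, x.1, x.2) ∈ sols := by decide
private lemma aux9 : ∀ x ∈ (Finset.Icc (-16:ℤ) 3) ×ˢ (Finset.Icc (0:ℤ) 13),
    cnd (9, x.1, x.2) → (9, x.1, x.2) ∈ sols := by decide
private lemma aux10 : ∀ x ∈ (Finset.Icc (-16:ℤ) 3) ×ˢ (Finset.Icc (0:ℤ) 13),
    cnd (10, x.1, x.2) → (10, x.1, x.2) ∈ sols := by decide
private lemma aux11 : ∀ x ∈ (Finset.Icc (-16:ℤ) 3) ×ˢ (Finset.Icc (0:ℤ) 13),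
    cnd (11, x.1, x.2) → (11, x.1, x.2) ∈ sols := by decide
private lemma aux12 : ∀ x ∈ (Finset.Icc (-16:ℤ) 3) ×ˢ (Finset.Icc (0:ℤ) 13),
    cnd (12, x.1, x.2) → (12, x.1, x.2) ∈ sols := by decide
private lemma aux13 : ∀ x ∈ (Finset.Icc (-16:ℤ) 3) ×ˢ (Finset.Icc (0:ℤ) 13),
    cnd (13, x.1, x.2) → (13, x.1, x.2) ∈ sols := by decide

private lemma bnd {a b c : ℤ} (h1 : 0 ≤ -2*a+b+7*c) (h2 : 0 ≤ a-2*b+c) (h3 : 0 ≤ 7*a+b-2*c)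
    (h4 : 0 ≤ 10*a+7*b+c) (h5 : 0 ≤ 7*a+10*b+7*c) (h6 : 0 ≤ a+7*b+10*c)
    (hq : -2*a*a-2*b*b-2*c*c+2*a*b+14*a*c+2*b*c ≤ 22) :
    a ≤ 13 ∧ c ≤ 13 ∧ -16 ≤ b ∧ b ≤ 3 ∧ 0 ≤ a ∧ 0 ≤ c := by
  have hQU : (0:ℤ) ≤ 22 - (-2*a*a-2*b*b-2*c*c+2*a*b+14*a*c+2*b*c) := by linarith
  refine ⟨?_, ?_, ?_, ?_, by linarith, by linarith⟩
  · by_contra hg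
    have g : (0:ℤ) ≤ a - 14 := by omega
    linarith [mul_nonneg h1 h5, mul_nonneg h1 hQU, mul_nonneg h1 g, mul_nonneg h2 h5,
      mul_nonneg h3 hQU, mul_nonneg h3 g, mul_nonneg h4 hQU, mul_nonneg h4 g,
      mul_nonneg (mul_nonneg h1 h1) g, mul_nonneg (mul_nonneg h1 h2) h5,
      mul_nonneg (mul_nonneg h1 h2) g, mul_nonneg (mul_nonneg h1 h3) h5,
      mul_nonneg (mul_nonneg h1 h4) h6, mul_nonneg (mul_nonneg h2 h4) h6,
      mul_nonneg (mul_nonneg h3 h3) h6, mul_nonneg (mul_nonneg h3 h3) g,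
      mul_nonneg (mul_nonneg h3 h4) h5, mul_nonneg (mul_nonneg h3 h4) h6]
  · by_contra hg
    have g : (0:ℤ) ≤ c - 14 := by omega
    linarith [mul_nonneg h1 hQU, mul_nonneg h1 g, mul_nonneg h2 g, mul_nonneg h3 hQU,
      mul_nonneg h4 h6, mul_nonneg h4 hQU, mul_nonneg h4 g,
      mul_nonneg (mul_nonneg h1 h1) h4, mul_nonneg (mul_nonneg h1 h2) h5,
      mul_nonneg (mul_nonneg h1 h2) g, mul_nonneg (mul_nonneg h1 h3) h5,
      mul_nonneg (mul_nonneg h1 h3) g, mul_nonneg (mul_nonneg h1 h4) h6,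
      mul_nonneg (mul_nonneg h1 h6) g, mul_nonneg (mul_nonneg h2 h4) h6,
      mul_nonneg (mul_nonneg h3 h3) h6, mul_nonneg (mul_nonneg h3 h3) g,
      mul_nonneg (mul_nonneg h3 h4) h5]
  · by_contra hg
    have g : (0:ℤ) ≤ -17 - b := by omega
    linarith [mul_nonneg h1 h5, mul_nonneg h1 g, mul_nonneg h2 hQU, mul_nonneg h3 hQU,
      mul_nonneg h3 g, mul_nonneg h4 h6, mul_nonneg h4 g, mul_nonneg h6 hQU,
      mul_nonneg (mul_nonneg h1 h3) h5, mul_nonneg (mul_nonneg h1 h4) h6,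
      mul_nonneg (mul_nonneg h1 h5) g, mul_nonneg (mul_nonneg h1 h6) g,
      mul_nonneg (mul_nonneg h2 h2) g, mul_nonneg (mul_nonneg h2 h3) g,
      mul_nonneg (mul_nonneg h2 h4) h6, mul_nonneg (mul_nonneg h3 h4) h5,
      mul_nonneg (mul_nonneg h3 h4) h6]
  · by_contra hg
    have g : (0:ℤ) ≤ b - 4 := by omega
    linarith [mul_nonneg h1 h2, mul_nonneg h1 h3, mul_nonneg h1 g, mul_nonneg h2 h4,
      mul_nonneg h2 h5, mul_nonneg h3 g]

private lemma master {a b c : ℤ} (h1 : 0 ≤ -2*a+b+7*c) (h2 : 0 ≤ a-2*b+c) (h3 : 0 ≤ 7*a+b-2*c)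
    (h4 : 0 ≤ 10*a+7*b+c) (h5 : 0 ≤ 7*a+10*b+7*c) (h6 : 0 ≤ a+7*b+10*c)
    (hq1 : 0 < -2*a*a-2*b*b-2*c*c+2*a*b+14*a*c+2*b*c)
    (hq2 : -2*a*a-2*b*b-2*c*c+2*a*b+14*a*c+2*b*c ≤ 22) :
    (a, b, c) ∈ sols := by
  obtain ⟨ha1, hc1, hb1, hb2, ha0, hc0⟩ := bnd h1 h2 h3 h4 h5 h6 hq2
  have hmem : (b, c) ∈ (Finset.Icc (-16:ℤ) 3) ×ˢ (Finset.Icc (0:ℤ) 13) := by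
    simp only [Finset.mem_product, Finset.mem_Icc]; omega
  have hcnd : ∀ a', a' = a → cnd (a', b, c) := by
    intro a' ha'
    subst ha'
    exact ⟨h1, h2, h3, h4, h5, h6, by
      unfold qf; dsimp only; linarith, by unfold qf; dsimp only; linarith⟩
  interval_cases a
  · exact aux0 (b, c) hmem (hcnd _ rfl)
  · exact aux1 (b, c) hmem (hcnd _ rfl)
  · exact aux2 (b, c) hmem (hcnd _ rfl)
  · exact aux3 (b, c) hmem (hcnd _ rfl)
  · exact aux4 (b, c) hmem (hcnd _ rfl)
  · exact aux5 (b, c) hmem (hcnd _ rfl)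
  · exact aux6 (b, c) hmem (hcnd _ rfl)
  · exact aux7 (b, c) hmem (hcnd _ rfl)
  · exact aux8 (b, c) hmem (hcnd _ rfl)
  · exact aux9 (b, c) hmem (hcnd _ rfl)
  · exact aux10 (b, c) hmem (hcnd _ rfl)
  · exact aux11 (b, c) hmem (hcnd _ rfl)
  · exact aux12 (b, c) hmem (hcnd _ rfl)
  · exact aux13 (b, c) hmem (hcnd _ rfl)

private def Gm : Matrix (Fin 3) (Fin 3) ℤ := !![-2, 1, 7; 1, -2, 1; 7, 1, -2]
private def Am : Fin 6 → Fin 3 → ℤ :=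
  ![![1, 0, 0], ![0, 1, 0], ![0, 0, 1], ![1, -2, 2], ![2, -3, 2], ![2, -2, 1]]

private def vecOf (p : ℤ × ℤ × ℤ) : Fin 3 → ℤ := ![p.1, p.2.1, p.2.2]

private lemma checkAll : ∀ p ∈ sols,
    (vecOf p) ⬝ᵥ (Gm *ᵥ vecOf p) = qf p ∧ ∀ i : Fin 6, 0 ≤ (vecOf p) ⬝ᵥ (Gm *ᵥ Am i) := by
  decide

private lemma valsAll : ∀ p ∈ sols, qf p ∈ ({4, 10, 12, 16, 18, 22} : Finset ℤ) := by decide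

private lemma key (s : ℤ) (hs1 : 0 < s) (hs2 : s ≤ 22) :
    {D : Fin 3 → ℤ | D ⬝ᵥ (Gm *ᵥ D) = s ∧ ∀ i : Fin 6, 0 ≤ D ⬝ᵥ (Gm *ᵥ Am i)} =
      ↑((sols.filter (fun p => qf p = s)).image vecOf) := by
  ext D
  simp only [Set.mem_setOf_eq, Finset.coe_image, Set.mem_image, Finset.mem_coe,
    Finset.mem_filter]
  constructor
  · rintro ⟨hQ, hA⟩
    simp [Gm, Am, mulVec, dotProduct, Fin.sum_univ_three, Fin.forall_fin_succ] at hQ hA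
    obtain ⟨h1, h2, h3, h4, h5, h6⟩ := hA
    have hq1 : 0 < -2*(D 0)*(D 0)-2*(D 1)*(D 1)-2*(D 2)*(D 2)+2*(D 0)*(D 1)+14*(D 0)*(D 2)+2*(D 1)*(D 2) := by
      nlinarith [hQ]
    have hq2 : -2*(D 0)*(D 0)-2*(D 1)*(D 1)-2*(D 2)*(D 2)+2*(D 0)*(D 1)+14*(D 0)*(D 2)+2*(D 1)*(D 2) ≤ 22 := by
      nlinarith [hQ]
    have hmem := master (a := D 0) (b := D 1) (c := D 2)
      (by linarith) (by linarith) (by linarith) (by linarith) (by linarith) (by linarith)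
      hq1 hq2
    refine ⟨(D 0, D 1, D 2), ⟨hmem, ?_⟩, ?_⟩
    · unfold qf; dsimp only; linarith [hQ]
    · funext i; fin_cases i <;> rfl
  · rintro ⟨p, ⟨hp, hqs⟩, rfl⟩
    obtain ⟨hv, hA⟩ := checkAll p hp
    exact ⟨hv.trans hqs, hA⟩

/-- The initial coefficients of the generating series `Ξ_X(T) = Σ T^{D²}` over big
and nef classes `D` on a K3 surface of type `S₂`: writing `N s` for the number of
vectors of square `s` meeting all six `(−2)`-curves nonnegatively, one has
`N 4 = 1`, `N 10 = 6`, `N 12 = 6`, `N 16 = 1`, `N 18 = 6`, `N 22 = 12`, and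
`N s = 0` for every other `0 < s ≤ 22`. -/
theorem stmt_6 :
    let G : Matrix (Fin 3) (Fin 3) ℤ := !![-2, 1, 7; 1, -2, 1; 7, 1, -2]
    let A : Fin 6 → Fin 3 → ℤ :=
      ![![1, 0, 0], ![0, 1, 0], ![0, 0, 1], ![1, -2, 2], ![2, -3, 2], ![2, -2, 1]]
    let N : ℤ → ℕ := fun s =>
      {D : Fin 3 → ℤ | D ⬝ᵥ (G *ᵥ D) = s ∧ ∀ i : Fin 6, 0 ≤ D ⬝ᵥ (G *ᵥ A i)}.ncard
    N 4 = 1 ∧ N 10 = 6 ∧ N 12 = 6 ∧ N 16 = 1 ∧ N 18 = 6 ∧ N 22 = 12 ∧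
      ∀ s : ℤ, 0 < s → s ≤ 22 → s ∉ ({4, 10, 12, 16, 18, 22} : Set ℤ) → N s = 0 := by
  intro G A N
  have hN : ∀ s : ℤ, 0 < s → s ≤ 22 →
      N s = ((sols.filter (fun p => qf p = s)).image vecOf).card := by
    intro s hs1 hs2
    show ({D : Fin 3 → ℤ | D ⬝ᵥ (Gm *ᵥ D) = s ∧ ∀ i : Fin 6, 0 ≤ D ⬝ᵥ (Gm *ᵥ Am i)}).ncard = _
    rw [key s hs1 hs2, Set.ncard_coe_finset]
  refine ⟨?_, ?_, ?_, ?_, ?_, ?_, ?_⟩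
  · rw [hN 4 (by norm_num) (by norm_num)]; decide
  · rw [hN 10 (by norm_num) (by norm_num)]; decide
  · rw [hN 12 (by norm_num) (by norm_num)]; decide
  · rw [hN 16 (by norm_num) (by norm_num)]; decide
  · rw [hN 18 (by norm_num) (by norm_num)]; decide
  · rw [hN 22 (by norm_num) (by norm_num)]; decide
  · intro s hs1 hs2 hs3
    rw [hN s hs1 hs2]
    have : sols.filter (fun p => qf p = s) = ∅ := by
      rw [Finset.filter_eq_empty_iff]
      intro p hp hqp
      have := valsAll p hp
      rw [hqp] at this
      simp only [Finset.mem_insert, Finset.mem_singleton] at this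
      simp only [Set.mem_insert_iff, Set.mem_singleton_iff] at hs3
      tauto
    rw [this]
    simp
end

section
/- Equip ℤ³ with the bilinear form x·y = xᵀGy, where G = [[12,0,0],[0,−2,1],[0,1,−2]]. Let A₁=(0,1,0), A₂=(0,0,1), A₃=(1,−3,−2), A₄=(1,−2,−3). Then D = (1,−2,−2) satisfies D·D = 4 and D·Aᵢ = 2 for all i ∈ {1,…,4}; D is the unique vector of ℤ³ with D·D = 4 and D·Aᵢ ≥ 0 for all i; and there is no vector D' ∈ ℤ³ with 0 < D'·D' < 4 and D'·Aᵢ ≥ 0 for all i ∈ {1,…,4}. -/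
open Matrix

lemma key_stmt7 (x y z : ℤ) (hQ1 : 0 < 12*x*x - 2*y*y - 2*z*z + 2*y*z)
    (hQ2 : 12*x*x - 2*y*y - 2*z*z + 2*y*z ≤ 4)
    (h1 : 0 ≤ -2*y + z) (h2 : 0 ≤ y - 2*z)
    (h3 : 0 ≤ 12*x + 4*y + z) (h4 : 0 ≤ 12*x + y + 4*z) :
    x = 1 ∧ y = -2 ∧ z = -2 := by
  have hy : y ≤ 0 := by omega
  have hz : z ≤ 0 := by omega
  have hx : 0 ≤ x := by omega
  have sqa : (4*y+z)*(4*y+z) ≤ 144*x*x := by nlinarith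
  have sqb : (y+4*z)*(y+4*z) ≤ 144*x*x := by nlinarith
  have hB : y*y + z*z - y*z ≤ 48 := by
    rcases le_total y z with h|h
    · nlinarith [sqa, mul_nonneg (show (0:ℤ) ≤ 3*y-8*z by omega) (show (0:ℤ) ≤ z - y by omega)]
    · nlinarith [sqb, mul_nonneg (show (0:ℤ) ≤ 3*z-8*y by omega) (show (0:ℤ) ≤ y - z by omega)]
  have hxb : x ≤ 2 := by nlinarith [sq_nonneg (x - 3)]
  have hyb : -8 ≤ y := by nlinarith [sq_nonneg (2*z - y), sq_nonneg (y + 8)]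
  have hzb : -8 ≤ z := by nlinarith [sq_nonneg (2*y - z), sq_nonneg (z + 8)]
  interval_cases x <;> interval_cases y <;> interval_cases z <;> omega

/-- On the lattice `S₃` with Gram matrix `G` in the basis `(L, A₁, A₂)`, the class
`D = L − 2A₁ − 2A₂ = (1,−2,−2)` has square `4`, meets each of the four
`(−2)`-curves with multiplicity `2`, is the unique such class of square `4`
meeting all `(−2)`-curves nonnegatively, and there is no big and nef class of
square strictly between `0` and `4`. -/
theorem stmt_7 :
    let G : Matrix (Fin 3) (Fin 3) ℤ := !![12, 0, 0; 0, -2, 1; 0, 1, -2]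
    let A : Fin 4 → Fin 3 → ℤ :=
      ![![0, 1, 0], ![0, 0, 1], ![1, -3, -2], ![1, -2, -3]]
    let D : Fin 3 → ℤ := ![1, -2, -2]
    D ⬝ᵥ (G *ᵥ D) = 4 ∧
    (∀ i : Fin 4, D ⬝ᵥ (G *ᵥ A i) = 2) ∧
    (∀ E : Fin 3 → ℤ, E ⬝ᵥ (G *ᵥ E) = 4 → (∀ i : Fin 4, 0 ≤ E ⬝ᵥ (G *ᵥ A i)) →
      E = D) ∧
    (¬ ∃ D' : Fin 3 → ℤ, 0 < D' ⬝ᵥ (G *ᵥ D') ∧ D' ⬝ᵥ (G *ᵥ D') < 4 ∧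
      ∀ i : Fin 4, 0 ≤ D' ⬝ᵥ (G *ᵥ A i)) := by
  intro G A D
  refine ⟨by decide, by decide, ?_, ?_⟩
  · intro E hE hA
    have h1 := hA 0
    have h2 := hA 1
    have h3 := hA 2
    have h4 := hA 3
    simp [G, A, Matrix.mulVec, dotProduct, Fin.sum_univ_succ] at hE h1 h2 h3 h4
    obtain ⟨hx, hy, hz⟩ := key_stmt7 (E 0) (E 1) (E 2) (by linarith) (by linarith)
      (by linarith) (by linarith) (by linarith) (by linarith)
    funext i
    fin_cases i <;> simp [D, hx, hy, hz]
  · rintro ⟨E, hpos, hlt, hA⟩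
    have h1 := hA 0
    have h2 := hA 1
    have h3 := hA 2
    have h4 := hA 3
    simp [G, A, Matrix.mulVec, dotProduct, Fin.sum_univ_succ] at hpos hlt h1 h2 h3 h4
    obtain ⟨hx, hy, hz⟩ := key_stmt7 (E 0) (E 1) (E 2) (by linarith) (by linarith)
      (by linarith) (by linarith) (by linarith) (by linarith)
    rw [hx, hy, hz] at hlt hpos
    omega
end

section
/- Equip ℤ³ with the bilinear form x·y = xᵀGy, where G = [[−2,1,5],[1,−2,0],[5,0,−2]]. Let A₁=(1,0,0), A₃=(0,1,0), A₅=(0,0,1), A₂=(1,−2,2), A₄=(3,−4,3), A₆=(3,−3,2). Then D = (1,−1,1) satisfies D·D = 2, D·A₁ = D·A₂ = 2 and D·Aⱼ = 3 for j ∈ {3,4,5,6}, and D is the unique vector of ℤ³ with D·D = 2 and D·Aᵢ ≥ 0 for all i ∈ {1,…,6}. -/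
open Matrix

/-- On the lattice `S₆` with Gram matrix `G` in the basis `(A₁, A₃, A₅)`, the class
`D = (1,−1,1)` has square `2`, meets `A₁, A₂` with multiplicity `2` and
`A₃, A₄, A₅, A₆` with multiplicity `3`, and is the unique class of square `2`
meeting all six `(−2)`-curves nonnegatively. Here `A 0 = A₁, …, A 5 = A₆`. -/
theorem stmt_8 :
    let G : Matrix (Fin 3) (Fin 3) ℤ := !![-2, 1, 5; 1, -2, 0; 5, 0, -2]
    let A : Fin 6 → Fin 3 → ℤ :=
      ![![1, 0, 0], ![1, -2, 2], ![0, 1, 0], ![3, -4, 3], ![0, 0, 1], ![3, -3, 2]]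
    let D : Fin 3 → ℤ := ![1, -1, 1]
    D ⬝ᵥ (G *ᵥ D) = 2 ∧
    D ⬝ᵥ (G *ᵥ A 0) = 2 ∧ D ⬝ᵥ (G *ᵥ A 1) = 2 ∧
    D ⬝ᵥ (G *ᵥ A 2) = 3 ∧ D ⬝ᵥ (G *ᵥ A 3) = 3 ∧
    D ⬝ᵥ (G *ᵥ A 4) = 3 ∧ D ⬝ᵥ (G *ᵥ A 5) = 3 ∧
    (∀ E : Fin 3 → ℤ, E ⬝ᵥ (G *ᵥ E) = 2 → (∀ i : Fin 6, 0 ≤ E ⬝ᵥ (G *ᵥ A i)) →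
      E = D) := by
  intro G A D
  refine ⟨by decide, by decide, by decide, by decide, by decide, by decide, by decide, ?_⟩
  intro E hQ hA
  obtain ⟨x, y, z, rfl⟩ : ∃ x y z, E = ![x, y, z] :=
    ⟨E 0, E 1, E 2, by funext i; fin_cases i <;> rfl⟩
  have h1 := hA 0
  have h2 := hA 1
  have h3 := hA 2
  have h4 := hA 3
  have h5 := hA 4
  have h6 : (0:ℤ) ≤ ![x, y, z] ⬝ᵥ (G *ᵥ ![3, -3, 2]) := hA 5
  simp [G, A, Matrix.mulVec, dotProduct, Fin.sum_univ_three] at hQ h1 h2 h3 h4 h5 h6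
  have hL0 : (0:ℤ) ≤ -2*x + y + 5*z := by linarith
  have hL1 : (0:ℤ) ≤ 6*x + 5*y + z := by linarith
  have hL2 : (0:ℤ) ≤ x - 2*y := by linarith
  have hL3 : (0:ℤ) ≤ 5*x + 11*y + 9*z := by linarith
  have hL4 : (0:ℤ) ≤ 5*x - 2*z := by linarith
  have hL5 : (0:ℤ) ≤ x + 9*y + 11*z := by linarith
  have hd0 : (0:ℤ) ≤ 2*x + 3*y + 3*z := by linarith
  -- Hodge-index type identity: 4 d^2 - 16 = positive definite form on D-orthogonal part
  have hdsq : 4*(2*x+3*y+3*z)^2 - 16 =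
      19*(2*y+(2*x+3*y+3*z))^2
        + 54*(2*y+(2*x+3*y+3*z))*(2*z-(2*x+3*y+3*z))
        + 43*(2*z-(2*x+3*y+3*z))^2 := by linear_combination (8 : ℤ) * hQ
  have hd2 : (2:ℤ) ≤ 2*x + 3*y + 3*z := by
    nlinarith [sq_nonneg (38*(2*y+(2*x+3*y+3*z)) + 54*(2*z-(2*x+3*y+3*z))),
      sq_nonneg (2*z-(2*x+3*y+3*z)), hdsq, hd0]
  -- cubic Positivstellensatz certificate bounding d from above
  have key : 2*(2*x+3*y+3*z) * (88 - 3*(2*x+3*y+3*z)^2) =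
      (-2*x + y + 5*z) * (-2*x + y + 5*z) * (6*x + 5*y + z)
      + (-2*x + y + 5*z) * (6*x + 5*y + z) * (6*x + 5*y + z)
      + 8 * ((-2*x + y + 5*z) * (5*x + 11*y + 9*z) * (5*x - 2*z))
      + 8 * ((6*x + 5*y + z) * (x - 2*y) * (x + 9*y + 11*z)) := by
    linear_combination (-44 * (4*x + 6*y + 6*z) : ℤ) * hQ
  have hnn : (0:ℤ) ≤ 2*(2*x+3*y+3*z) * (88 - 3*(2*x+3*y+3*z)^2) := by
    rw [key]
    have P1 := mul_nonneg (mul_nonneg hL0 hL0) hL1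
    have P2 := mul_nonneg (mul_nonneg hL0 hL1) hL1
    have P3 := mul_nonneg (mul_nonneg hL0 hL3) hL4
    have P4 := mul_nonneg (mul_nonneg hL1 hL2) hL5
    linarith
  have hd5 : 2*x + 3*y + 3*z ≤ 5 := by
    by_contra hc
    push_neg at hc
    have hD6 : (6:ℤ) ≤ 2*x + 3*y + 3*z := by linarith
    have hsq : (36:ℤ) ≤ (2*x+3*y+3*z)^2 := by nlinarith
    have hcub := mul_nonneg hd0 (by linarith : (0:ℤ) ≤ (2*x+3*y+3*z)^2 - 36)
    nlinarith [hnn, hcub, hD6]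
  have hx : 1 ≤ x ∧ x ≤ 4 := by omega
  have hy : -5 ≤ y ∧ y ≤ 0 := by omega
  have hz : 1 ≤ z ∧ z ≤ 4 := by omega
  obtain ⟨hx1, hx2⟩ := hx
  obtain ⟨hy1, hy2⟩ := hy
  obtain ⟨hz1, hz2⟩ := hz
  interval_cases x <;> interval_cases y <;> interval_cases z <;>
    first | rfl | omega
end

section
/- Equip ℤ⁴ with the bilinear form x·y = xᵀGy, where G = [[2,1,1,1],[1,−2,0,0],[1,0,−2,0],[1,0,0,−2]]. Let L=(1,0,0,0), A₁=(0,1,0,0), A₂=(0,0,1,0), A₃=(0,0,0,1), A₄=L−A₁, A₅=L−A₂, A₆=L−A₃. Then L·L = 2, L·Aᵢ = 1 for all i ∈ {1,…,6}, and L is the unique vector D ∈ ℤ⁴ with D·D = 2 and D·Aᵢ ≥ 0 for all i ∈ {1,…,6}. -/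
open Matrix

/-- On the rank-4 lattice `L(24)` with Gram matrix `G` in the basis
`(L, A₁, A₂, A₃)`, the class `L` has square `2`, meets each of the six
`(−2)`-curves with multiplicity `1`, and is the unique class of square `2`
meeting all six `(−2)`-curves nonnegatively. -/
theorem stmt_9 :
    let G : Matrix (Fin 4) (Fin 4) ℤ :=
      !![2, 1, 1, 1; 1, -2, 0, 0; 1, 0, -2, 0; 1, 0, 0, -2]
    let L : Fin 4 → ℤ := ![1, 0, 0, 0]
    let A : Fin 6 → Fin 4 → ℤ :=
      ![![0, 1, 0, 0], ![0, 0, 1, 0], ![0, 0, 0, 1],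
        ![1, -1, 0, 0], ![1, 0, -1, 0], ![1, 0, 0, -1]]
    L ⬝ᵥ (G *ᵥ L) = 2 ∧
    (∀ i : Fin 6, L ⬝ᵥ (G *ᵥ A i) = 1) ∧
    (∀ D : Fin 4 → ℤ, D ⬝ᵥ (G *ᵥ D) = 2 → (∀ i : Fin 6, 0 ≤ D ⬝ᵥ (G *ᵥ A i)) →
      D = L) := by
  intro G L A
  refine ⟨by decide, by decide, ?_⟩
  intro D hD hA
  have h1 := hA 0
  have h2 := hA 1
  have h3 := hA 2
  have h4 := hA 3
  have h5 := hA 4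
  have h6 := hA 5
  rw [show G *ᵥ A 0 = ![1,-2,0,0] from by decide] at h1
  rw [show G *ᵥ A 1 = ![1,0,-2,0] from by decide] at h2
  rw [show G *ᵥ A 2 = ![1,0,0,-2] from by decide] at h3
  rw [show G *ᵥ A 3 = ![1,3,1,1] from by decide] at h4
  rw [show G *ᵥ A 4 = ![1,1,3,1] from by decide] at h5
  rw [show G *ᵥ A 5 = ![1,1,1,3] from by decide] at h6
  simp only [G, dotProduct, mulVec, Fin.sum_univ_four, Matrix.cons_val_zero,
    Matrix.cons_val_one, Matrix.head_cons, Matrix.cons_val_two, Matrix.tail_cons,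
    Matrix.cons_val_three, Matrix.cons_val_succ, Matrix.of_apply,
    Matrix.vecHead, Matrix.vecTail, Matrix.cons_val',
    Matrix.empty_val', Matrix.cons_val_fin_one, Function.comp] at hD h1 h2 h3 h4 h5 h6
  ring_nf at hD h1 h2 h3 h4 h5 h6
  set a := D 0 with ha
  set b := D 1 with hb
  set c := D 2 with hc
  set d := D 3 with hd
  have hage : 1 ≤ a := by
    nlinarith [sq_nonneg b, sq_nonneg c, sq_nonneg d, mul_nonneg h1 h4, mul_nonneg h2 h5, mul_nonneg h3 h6]
  have hale : a ≤ 2 := by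
    nlinarith [mul_nonneg h1 h4, mul_nonneg h2 h5, mul_nonneg h3 h6, sq_nonneg (4*b+4*c+4*d+a), sq_nonneg a]
  have hble : b ≤ 1 := by linarith
  have hcle : c ≤ 1 := by linarith
  have hdle : d ≤ 1 := by linarith
  have hbge : -1 ≤ b := by omega
  have hcge : -1 ≤ c := by omega
  have hdge : -1 ≤ d := by omega
  have hD0 : a = 1 ∧ b = 0 ∧ c = 0 ∧ d = 0 := by
    interval_cases a <;> interval_cases b <;> interval_cases c <;> interval_cases d <;> omega
  funext i
  fin_cases i <;>
    simp [L, show D 0 = 1 from hD0.1, show D 1 = 0 from hD0.2.1,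
      show D 2 = 0 from hD0.2.2.1, show D 3 = 0 from hD0.2.2.2]
end

section
/- For integers a, b ∈ {0,1,2} and c ∈ {0,1,2,3,4}, writing x̄ = 4−x, let M(a,b,c) be the symmetric 6×6 integer matrix with rows (−2,6,a,ā,b,b̄), (6,−2,ā,a,b̄,b), (a,ā,−2,6,c,c̄), (ā,a,6,−2,c̄,c), (b,b̄,c,c̄,−2,6), (b̄,b,c̄,c,6,−2). Then the rank of M(a,b,c) (over ℚ) is at most 4, and it equals 3 if and only if a = 0, b = 0 and c = 4. -/
open Matrix

private lemma cv6 {α : Type*} (x : α) (u : Fin 5 → α) : vecCons x u 5 = u 4 := rfl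
private lemma cv5 {α : Type*} (x : α) (u : Fin 4 → α) : vecCons x u 4 = u 3 := rfl
private lemma cv4 {α : Type*} (x : α) (u : Fin 3 → α) : vecCons x u 3 = u 2 := rfl
private lemma cv3 {α : Type*} (x : α) (u : Fin 2 → α) : vecCons x u 2 = u 1 := rfl
private lemma cv2 {α : Type*} (x : α) (u : Fin 1 → α) : vecCons x u 1 = u 0 := rfl

/-- The big symmetric matrix, as a function of rational parameters. -/
private def bigM (a b c : ℚ) : Matrix (Fin 6) (Fin 6) ℚ :=
  !![-2, 6, a, 4 - a, b, 4 - b;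
     6, -2, 4 - a, a, 4 - b, b;
     a, 4 - a, -2, 6, c, 4 - c;
     4 - a, a, 6, -2, 4 - c, c;
     b, 4 - b, c, 4 - c, -2, 6;
     4 - b, b, 4 - c, c, 6, -2]

/-- Selecting a `k × k` submatrix is expressible as a product `P * M * Q`. -/
private lemma submatrix_eq_mul {k m : ℕ} (M : Matrix (Fin m) (Fin m) ℚ)
    (f g : Fin k → Fin m) :
    (Matrix.of fun (i : Fin k) (l : Fin m) => if l = f i then (1 : ℚ) else 0) * M *
      (Matrix.of fun (l : Fin m) (j : Fin k) => if l = g j then (1 : ℚ) else 0) =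
      M.submatrix f g := by
  ext i j
  have h1 : ((Matrix.of fun (i : Fin k) (l : Fin m) => if l = f i then (1 : ℚ) else 0) * M) i
      = fun l => M (f i) l := by
    funext l
    simp [Matrix.mul_apply, Finset.sum_ite_eq']
  rw [Matrix.mul_apply]
  simp [h1, Matrix.mul_apply, Finset.sum_ite_eq]

/-- If some `k × k` submatrix has nonzero determinant, then `k ≤ rank`. -/
private lemma le_rank_of_det {k m : ℕ} (M : Matrix (Fin m) (Fin m) ℚ)
    (f g : Fin k → Fin m) (h : (M.submatrix f g).det ≠ 0) : k ≤ M.rank := by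
  rw [← submatrix_eq_mul M f g] at h
  set P := (Matrix.of fun (i : Fin k) (l : Fin m) => if l = f i then (1 : ℚ) else 0)
  set Q := (Matrix.of fun (l : Fin m) (j : Fin k) => if l = g j then (1 : ℚ) else 0)
  have h1 : (P * M * Q).rank = k := by
    rw [Matrix.rank_of_isUnit _ ((Matrix.isUnit_iff_isUnit_det _).2 (isUnit_iff_ne_zero.mpr h))]
    simp
  calc k = (P * M * Q).rank := h1.symm
    _ ≤ (M * Q).rank := by
        rw [Matrix.mul_assoc]; exact Matrix.rank_mul_le_right _ _
    _ ≤ M.rank := Matrix.rank_mul_le_left _ _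

private lemma sub4 (a b c : ℚ) :
    (bigM a b c).submatrix ![0, 1, 2, 4] ![0, 1, 2, 4] =
      !![-2, 6, a, b; 6, -2, 4 - a, 4 - b; a, 4 - a, -2, c; b, 4 - b, c, -2] := by
  ext i j
  fin_cases i <;> fin_cases j <;> rfl

private lemma det4 (a b c : ℚ) :
    (!![-2, 6, a, b; 6, -2, 4 - a, 4 - b; a, 4 - a, -2, c; b, 4 - b, c, -2] :
      Matrix (Fin 4) (Fin 4) ℚ).det =
    16 * (2*a*a + 2*b*b + 2*c*c + a*b*c - 2*a*b - 2*a*c - 2*b*c - 4*a - 4*b - 4*c - 16) := by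
  rw [Matrix.det_succ_row_zero]
  simp [Fin.sum_univ_succ, Matrix.det_fin_three, Matrix.submatrix_apply, Matrix.cons_val_two,
    Matrix.vecHead, Matrix.vecTail, Fin.succAbove]
  ring

private lemma rank_ge_four (a b c : ℚ)
    (h : 2*a*a + 2*b*b + 2*c*c + a*b*c - 2*a*b - 2*a*c - 2*b*c - 4*a - 4*b - 4*c - 16 ≠ 0) :
    4 ≤ (bigM a b c).rank := by
  apply le_rank_of_det (bigM a b c) ![0, 1, 2, 4] ![0, 1, 2, 4]
  rw [sub4, det4]
  exact mul_ne_zero (by norm_num) h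

set_option maxHeartbeats 1000000 in
private lemma rank_le_four (a b c : ℚ) : (bigM a b c).rank ≤ 4 := by
  have hfac : bigM a b c =
      (!![-2, a, b, 4; 6, 4-a, 4-b, 4; a, -2, c, 4; 4-a, 6, 4-c, 4; b, c, -2, 4; 4-b, 4-c, 6, 4] :
        Matrix (Fin 6) (Fin 4) ℚ) *
      (!![1,-1,0,0,0,0; 0,0,1,-1,0,0; 0,0,0,0,1,-1; 0,1,0,1,0,1] :
        Matrix (Fin 4) (Fin 6) ℚ) := by
    ext i j
    fin_cases i <;> fin_cases j <;>
      simp [bigM, Matrix.mul_apply, Fin.sum_univ_succ, cv6, cv5, cv4, cv3, cv2] <;> ring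
  rw [hfac]
  refine (Matrix.rank_mul_le_left _ _).trans ?_
  exact (Matrix.rank_le_card_width _).trans_eq (Fintype.card_fin _)

set_option maxHeartbeats 1000000 in
private lemma rank_special : (bigM 0 0 4).rank = 3 := by
  refine le_antisymm ?_ ?_
  · have hfac : bigM 0 0 4 =
        (!![-2,0,0; 6,4,4; 0,-2,4; 4,6,0; 0,4,-2; 4,0,6] : Matrix (Fin 6) (Fin 3) ℚ) *
        (!![1,-3,0,-2,0,-2; 0,2,1,1,0,2; 0,2,0,2,1,1] : Matrix (Fin 3) (Fin 6) ℚ) := by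
      ext i j
      fin_cases i <;> fin_cases j <;>
        norm_num [bigM, Matrix.mul_apply, Fin.sum_univ_succ, cv6, cv5, cv4, cv3, cv2]
    rw [hfac]
    refine (Matrix.rank_mul_le_left _ _).trans ?_
    exact (Matrix.rank_le_card_width _).trans_eq (Fintype.card_fin _)
  · apply le_rank_of_det (bigM 0 0 4) ![0, 1, 2] ![0, 1, 2]
    have hs : (bigM 0 0 4).submatrix ![0, 1, 2] ![0, 1, 2] =
        (!![-2,6,0; 6,-2,4; 0,4,-2] : Matrix (Fin 3) (Fin 3) ℚ) := by
      ext i j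
      fin_cases i <;> fin_cases j <;> norm_num [bigM] <;> rfl
    rw [hs]
    norm_num [Matrix.det_fin_three, Matrix.cons_val_two, Matrix.vecHead, Matrix.vecTail]

private lemma poly_zero_iff (a b c : ℤ)
    (ha0 : 0 ≤ a) (ha2 : a ≤ 2) (hb0 : 0 ≤ b) (hb2 : b ≤ 2)
    (hc0 : 0 ≤ c) (hc4 : c ≤ 4) :
    2*a*a + 2*b*b + 2*c*c + a*b*c - 2*a*b - 2*a*c - 2*b*c - 4*a - 4*b - 4*c - 16 = 0 ↔
      (a = 0 ∧ b = 0 ∧ c = 4) := by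
  constructor
  · intro h
    interval_cases a <;> interval_cases b <;> interval_cases c <;> omega
  · rintro ⟨rfl, rfl, rfl⟩; ring

/-- The intersection matrix `M(a,b,c)` of the six `(−2)`-curves over three
`6`-tangent conics has rank at most `4`, and rank `3` iff `a = 0, b = 0, c = 4`. -/
theorem stmt_10 (a b c : ℤ)
    (ha0 : 0 ≤ a) (ha2 : a ≤ 2) (hb0 : 0 ≤ b) (hb2 : b ≤ 2)
    (hc0 : 0 ≤ c) (hc4 : c ≤ 4) :
    let M : Matrix (Fin 6) (Fin 6) ℚ :=
      !![-2, 6, (a : ℚ), 4 - a, (b : ℚ), 4 - b;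
         6, -2, 4 - a, (a : ℚ), 4 - b, (b : ℚ);
         (a : ℚ), 4 - a, -2, 6, (c : ℚ), 4 - c;
         4 - a, (a : ℚ), 6, -2, 4 - c, (c : ℚ);
         (b : ℚ), 4 - b, (c : ℚ), 4 - c, -2, 6;
         4 - b, (b : ℚ), 4 - c, (c : ℚ), 6, -2]
    M.rank ≤ 4 ∧ (M.rank = 3 ↔ (a = 0 ∧ b = 0 ∧ c = 4)) := by
  intro M
  have hM : M = bigM (a : ℚ) (b : ℚ) (c : ℚ) := rfl
  rw [hM]
  refine ⟨rank_le_four _ _ _, ?_, ?_⟩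
  · intro h3
    by_contra hne
    have hp : 2*a*a + 2*b*b + 2*c*c + a*b*c - 2*a*b - 2*a*c - 2*b*c
        - 4*a - 4*b - 4*c - 16 ≠ 0 := fun h0 =>
      hne ((poly_zero_iff a b c ha0 ha2 hb0 hb2 hc0 hc4).mp h0)
    have h4 : 4 ≤ (bigM (a:ℚ) (b:ℚ) (c:ℚ)).rank := by
      apply rank_ge_four
      intro hz
      apply hp
      have : ((2*a*a + 2*b*b + 2*c*c + a*b*c - 2*a*b - 2*a*c - 2*b*c
          - 4*a - 4*b - 4*c - 16 : ℤ) : ℚ) = 0 := by push_cast; linarith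
      exact_mod_cast this
    omega
  · rintro ⟨rfl, rfl, rfl⟩
    have h0 : ((0:ℤ):ℚ) = 0 := by norm_num
    have h4 : ((4:ℤ):ℚ) = 4 := by norm_num
    rw [h0, h4]
    exact rank_special
end

section
/- Let a₁,b₁,c₁,d₁,a₂,b₂,c₂,d₂,a₃,b₃,c₃,d₃ be integers in {0,1,…,16} with aᵢ+bᵢ+cᵢ+dᵢ = 16 for i = 1,2,3, and with a₁ ≤ b₁ and a₂ ≤ b₂. Let M be the symmetric 6×6 matrix with rows (−2,10,a₁,b₁,a₂,b₂), (10,−2,c₁,d₁,c₂,d₂), (a₁,c₁,−2,10,a₃,b₃), (b₁,d₁,10,−2,c₃,d₃), (a₂,c₂,a₃,c₃,−2,10), (b₂,d₂,b₃,d₃,10,−2). Then M has rank 3 (over ℚ) if and only if (a₁,b₁,c₁,d₁,a₂,b₂,c₂,d₂,a₃,b₃,c₃,d₃) = (1,7,7,1,1,7,7,1,7,1,1,7). -/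
open Matrix

private lemma rank_submatrix_le' {k l m n : ℕ} (A : Matrix (Fin m) (Fin n) ℚ)
    (f : Fin k → Fin m) (g : Fin l → Fin n) : (A.submatrix f g).rank ≤ A.rank := by
  have h : A.submatrix f g =
      (Matrix.of fun i j => if f i = j then (1:ℚ) else 0) * A *
      (Matrix.of fun i j => if g j = i then (1:ℚ) else 0) := by
    ext i j
    simp [Matrix.mul_apply, ite_mul, mul_ite, Finset.sum_ite_eq, Finset.sum_ite_eq']
  rw [h]
  exact (Matrix.rank_mul_le_left _ _).trans (Matrix.rank_mul_le_right _ _)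

private lemma det_fin_four' (A : Matrix (Fin 4) (Fin 4) ℚ) :
    A.det = A 0 0*A 1 1*A 2 2*A 3 3 - A 0 0*A 1 1*A 2 3*A 3 2 - A 0 0*A 1 2*A 2 1*A 3 3 + A 0 0*A 1 2*A 2 3*A 3 1 + A 0 0*A 1 3*A 2 1*A 3 2 - A 0 0*A 1 3*A 2 2*A 3 1 - A 0 1*A 1 0*A 2 2*A 3 3 + A 0 1*A 1 0*A 2 3*A 3 2 + A 0 1*A 1 2*A 2 0*A 3 3 - A 0 1*A 1 2*A 2 3*A 3 0 - A 0 1*A 1 3*A 2 0*A 3 2 + A 0 1*A 1 3*A 2 2*A 3 0 + A 0 2*A 1 0*A 2 1*A 3 3 - A 0 2*A 1 0*A 2 3*A 3 1 - A 0 2*A 1 1*A 2 0*A 3 3 + A 0 2*A 1 1*A 2 3*A 3 0 + A 0 2*A 1 3*A 2 0*A 3 1 - A 0 2*A 1 3*A 2 1*A 3 0 - A 0 3*A 1 0*A 2 1*A 3 2 + A 0 3*A 1 0*A 2 2*A 3 1 + A 0 3*A 1 1*A 2 0*A 3 2 - A 0 3*A 1 1*A 2 2*A 3 0 - A 0 3*A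 1 2*A 2 0*A 3 1 + A 0 3*A 1 2*A 2 1*A 3 0 := by
  rw [Matrix.det_succ_row_zero]
  simp [Fin.sum_univ_succ, Matrix.det_fin_three, Fin.succAbove,
    show (Fin.succ 2 : Fin 4) = 3 by decide, show (Fin.castSucc 2 : Fin 4) = 2 by decide,
    show ((if (1:Fin 4) < Fin.succ 2 then 1 else 2) : Fin 4) = 1 by decide]
  ring

private lemma cons_val_five' {α : Type*} {m : ℕ} (x : α) (u : Fin (m+5) → α) :
    Matrix.vecCons x u 5 =
      Matrix.vecHead (Matrix.vecTail (Matrix.vecTail (Matrix.vecTail (Matrix.vecTail u)))) :=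
  rfl

set_option maxHeartbeats 4000000 in
private lemma lemA : ∀ a ∈ Finset.range 17, ∀ b ∈ Finset.range 17, ∀ c ∈ Finset.range 17,
    a + b + c ≤ 16 →
    9216 + (a*(16-(a+b+c)))^2 + (b*c)^2 =
      4*(a^2+b^2+c^2+(16-(a+b+c))^2) + 40*(a*b+a*c+b*(16-(a+b+c))+c*(16-(a+b+c))) +
        200*(a*(16-(a+b+c))+b*c) + 2*(a*b*c*(16-(a+b+c))) →
    16-(a+b+c) = a ∧ c = b := by decide

set_option maxHeartbeats 4000000 in
private lemma lemB : ∀ u1 ∈ Finset.range 5, ∀ v1 ∈ Finset.range 9,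
    ∀ u2 ∈ Finset.range 5, ∀ v2 ∈ Finset.range 9, ∀ u3 ∈ Finset.range 9,
    u1 + v1 = 8 → u2 + v2 = 8 →
    96*u3^2 + v1^2*u2^2 + u1^2*v2^2 =
      384 + 4*v2^2 + 40*u2*v2 + 4*u2^2 + 4*v1*v2*u3 + 20*v1*u2*u3 + 4*v1^2 +
      20*u1*v2*u3 + 4*u1*u2*u3 + 40*u1*v1 + 2*u1*v1*u2*v2 + 4*u1^2 →
    u1 = 1 ∧ u2 = 1 ∧ u3 = 7 := by decide

set_option maxHeartbeats 2000000 in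
/-- The intersection matrix of the six rational quartic curves on a quartic K3
surface with three split quadric sections has rank `3` iff the parameters are
`(1,7,7,1,1,7,7,1,7,1,1,7)`. -/
theorem stmt_11 (a1 b1 c1 d1 a2 b2 c2 d2 a3 b3 c3 d3 : ℤ)
    (ha1 : 0 ≤ a1 ∧ a1 ≤ 16) (hb1 : 0 ≤ b1 ∧ b1 ≤ 16)
    (hc1 : 0 ≤ c1 ∧ c1 ≤ 16) (hd1 : 0 ≤ d1 ∧ d1 ≤ 16)
    (ha2 : 0 ≤ a2 ∧ a2 ≤ 16) (hb2 : 0 ≤ b2 ∧ b2 ≤ 16)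
    (hc2 : 0 ≤ c2 ∧ c2 ≤ 16) (hd2 : 0 ≤ d2 ∧ d2 ≤ 16)
    (ha3 : 0 ≤ a3 ∧ a3 ≤ 16) (hb3 : 0 ≤ b3 ∧ b3 ≤ 16)
    (hc3 : 0 ≤ c3 ∧ c3 ≤ 16) (hd3 : 0 ≤ d3 ∧ d3 ≤ 16)
    (hs1 : a1 + b1 + c1 + d1 = 16) (hs2 : a2 + b2 + c2 + d2 = 16)
    (hs3 : a3 + b3 + c3 + d3 = 16)
    (h1 : a1 ≤ b1) (h2 : a2 ≤ b2) :
    let M : Matrix (Fin 6) (Fin 6) ℚ :=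
      !![-2, 10, (a1 : ℚ), (b1 : ℚ), (a2 : ℚ), (b2 : ℚ);
         10, -2, (c1 : ℚ), (d1 : ℚ), (c2 : ℚ), (d2 : ℚ);
         (a1 : ℚ), (c1 : ℚ), -2, 10, (a3 : ℚ), (b3 : ℚ);
         (b1 : ℚ), (d1 : ℚ), 10, -2, (c3 : ℚ), (d3 : ℚ);
         (a2 : ℚ), (c2 : ℚ), (a3 : ℚ), (c3 : ℚ), -2, 10;
         (b2 : ℚ), (d2 : ℚ), (b3 : ℚ), (d3 : ℚ), 10, -2]
    M.rank = 3 ↔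
      (a1, b1, c1, d1, a2, b2, c2, d2, a3, b3, c3, d3) =
        ((1 : ℤ), 7, 7, 1, 1, 7, 7, 1, 7, 1, 1, 7) := by
  intro M
  constructor
  · intro hrank
    have hdet : ∀ (f g : Fin 4 → Fin 6), (M.submatrix f g).det = 0 := by
      intro f g
      by_contra hd
      have hle : (M.submatrix f g).rank ≤ 3 := hrank ▸ rank_submatrix_le' M f g
      have heq : (M.submatrix f g).rank = 4 := by
        rw [Matrix.rank_of_isUnit _ ((Matrix.isUnit_iff_isUnit_det _).mpr
          (isUnit_iff_ne_zero.mpr hd))]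
        simp
      omega
    have e1 := hdet ![0,1,2,3] ![0,1,2,3]
    have e2 := hdet ![0,1,4,5] ![0,1,4,5]
    have e3 := hdet ![2,3,4,5] ![2,3,4,5]
    have e4 := hdet ![0,1,2,4] ![0,1,2,4]
    rw [det_fin_four'] at e1 e2 e3 e4
    simp [M, Function.comp, Matrix.submatrix_apply, cons_val_five', Matrix.vecHead,
      Matrix.vecTail] at e1 e2 e3 e4
    -- lift everything to ℕ
    lift a1 to ℕ using ha1.1 with A1
    lift b1 to ℕ using hb1.1 with B1
    lift c1 to ℕ using hc1.1 with C1
    lift d1 to ℕ using hd1.1 with D1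
    lift a2 to ℕ using ha2.1 with A2
    lift b2 to ℕ using hb2.1 with B2
    lift c2 to ℕ using hc2.1 with C2
    lift d2 to ℕ using hd2.1 with D2
    lift a3 to ℕ using ha3.1 with A3
    lift b3 to ℕ using hb3.1 with B3
    lift c3 to ℕ using hc3.1 with C3
    lift d3 to ℕ using hd3.1 with D3
    have hsn1 : A1 + B1 + C1 + D1 = 16 := by exact_mod_cast hs1
    have hsn2 : A2 + B2 + C2 + D2 = 16 := by exact_mod_cast hs2
    have hsn3 : A3 + B3 + C3 + D3 = 16 := by exact_mod_cast hs3
    have bb : A1 ≤ 16 ∧ B1 ≤ 16 ∧ C1 ≤ 16 ∧ A2 ≤ 16 ∧ B2 ≤ 16 ∧ C2 ≤ 16 ∧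
        A3 ≤ 16 ∧ B3 ≤ 16 ∧ C3 ≤ 16 := by
      refine ⟨?_, ?_, ?_, ?_, ?_, ?_, ?_, ?_, ?_⟩ <;> omega
    have f1 : 9216 + (A1*D1)^2 + (B1*C1)^2 =
        4*(A1^2+B1^2+C1^2+D1^2) + 40*(A1*B1+A1*C1+B1*D1+C1*D1) +
          200*(A1*D1+B1*C1) + 2*(A1*B1*C1*D1) := by
      have h : ((9216 + (A1*D1)^2 + (B1*C1)^2 : ℕ) : ℚ) =
          ((4*(A1^2+B1^2+C1^2+D1^2) + 40*(A1*B1+A1*C1+B1*D1+C1*D1) +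
            200*(A1*D1+B1*C1) + 2*(A1*B1*C1*D1) : ℕ) : ℚ) := by
        push_cast
        linear_combination e1
      exact_mod_cast h
    have f2 : 9216 + (A2*D2)^2 + (B2*C2)^2 =
        4*(A2^2+B2^2+C2^2+D2^2) + 40*(A2*B2+A2*C2+B2*D2+C2*D2) +
          200*(A2*D2+B2*C2) + 2*(A2*B2*C2*D2) := by
      have h : ((9216 + (A2*D2)^2 + (B2*C2)^2 : ℕ) : ℚ) =
          ((4*(A2^2+B2^2+C2^2+D2^2) + 40*(A2*B2+A2*C2+B2*D2+C2*D2) +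
            200*(A2*D2+B2*C2) + 2*(A2*B2*C2*D2) : ℕ) : ℚ) := by
        push_cast
        linear_combination e2
      exact_mod_cast h
    have f3 : 9216 + (A3*D3)^2 + (B3*C3)^2 =
        4*(A3^2+B3^2+C3^2+D3^2) + 40*(A3*B3+A3*C3+B3*D3+C3*D3) +
          200*(A3*D3+B3*C3) + 2*(A3*B3*C3*D3) := by
      have h : ((9216 + (A3*D3)^2 + (B3*C3)^2 : ℕ) : ℚ) =
          ((4*(A3^2+B3^2+C3^2+D3^2) + 40*(A3*B3+A3*C3+B3*D3+C3*D3) +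
            200*(A3*D3+B3*C3) + 2*(A3*B3*C3*D3) : ℕ) : ℚ) := by
        push_cast
        linear_combination e3
      exact_mod_cast h
    have g1 : D1 = A1 ∧ C1 = B1 := by
      have hD : D1 = 16 - (A1+B1+C1) := by omega
      have := lemA A1 (Finset.mem_range.mpr (by omega)) B1 (Finset.mem_range.mpr (by omega))
        C1 (Finset.mem_range.mpr (by omega)) (by omega) (by rw [← hD]; exact f1)
      omega
    have g2 : D2 = A2 ∧ C2 = B2 := by
      have hD : D2 = 16 - (A2+B2+C2) := by omega
      have := lemA A2 (Finset.mem_range.mpr (by omega)) B2 (Finset.mem_range.mpr (by omega))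
        C2 (Finset.mem_range.mpr (by omega)) (by omega) (by rw [← hD]; exact f2)
      omega
    have g3 : D3 = A3 ∧ C3 = B3 := by
      have hD : D3 = 16 - (A3+B3+C3) := by omega
      have := lemA A3 (Finset.mem_range.mpr (by omega)) B3 (Finset.mem_range.mpr (by omega))
        C3 (Finset.mem_range.mpr (by omega)) (by omega) (by rw [← hD]; exact f3)
      omega
    have hA1le : A1 ≤ 4 := by
      have : A1 ≤ B1 := by exact_mod_cast h1
      omega
    have hA2le : A2 ≤ 4 := by
      have : A2 ≤ B2 := by exact_mod_cast h2
      omega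
    have f4 : 96*A3^2 + C1^2*A2^2 + A1^2*C2^2 =
        384 + 4*C2^2 + 40*A2*C2 + 4*A2^2 + 4*C1*C2*A3 + 20*C1*A2*A3 + 4*C1^2 +
        20*A1*C2*A3 + 4*A1*A2*A3 + 40*A1*C1 + 2*A1*C1*A2*C2 + 4*A1^2 := by
      have h : ((96*A3^2 + C1^2*A2^2 + A1^2*C2^2 : ℕ) : ℚ) =
          ((384 + 4*C2^2 + 40*A2*C2 + 4*A2^2 + 4*C1*C2*A3 + 20*C1*A2*A3 + 4*C1^2 +
            20*A1*C2*A3 + 4*A1*A2*A3 + 40*A1*C1 + 2*A1*C1*A2*C2 + 4*A1^2 : ℕ) : ℚ) := by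
        push_cast
        linear_combination e4
      exact_mod_cast h
    have g4 := lemB A1 (Finset.mem_range.mpr (by omega)) C1 (Finset.mem_range.mpr (by omega))
      A2 (Finset.mem_range.mpr (by omega)) C2 (Finset.mem_range.mpr (by omega))
      A3 (Finset.mem_range.mpr (by omega)) (by omega) (by omega) f4
    simp only [Prod.mk.injEq]
    refine ⟨?_, ?_, ?_, ?_, ?_, ?_, ?_, ?_, ?_, ?_, ?_, ?_⟩ <;> omega
  · intro h
    simp only [Prod.mk.injEq] at h
    obtain ⟨ea1, eb1, ec1, ed1, ea2, eb2, ec2, ed2, ea3, eb3, ec3, ed3⟩ := h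
    subst ea1 eb1 ec1 ed1 ea2 eb2 ec2 ed2 ea3 eb3 ec3 ed3
    refine le_antisymm ?_ ?_
    · have hM : M = (!![1,0,0;0,1,0;0,0,1;1,1,-1;3/2,1/2,-1;-1/2,1/2,1] :
          Matrix (Fin 6) (Fin 3) ℚ) *
          (!![-2,10,1,7,1,7;10,-2,7,1,7,1;1,7,-2,10,7,1] : Matrix (Fin 3) (Fin 6) ℚ) := by
        ext i j
        fin_cases i <;> fin_cases j <;>
          simp [M, Matrix.mul_apply, Fin.sum_univ_succ, cons_val_five', Matrix.vecHead,
            Matrix.vecTail] <;> norm_num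
      rw [hM]
      exact (Matrix.rank_mul_le_left _ _).trans
        ((Matrix.rank_le_card_width _).trans (by simp))
    · have hd : (M.submatrix ![0,1,2] ![0,1,2]).det = 432 := by
        rw [Matrix.det_fin_three]
        simp [M, Matrix.submatrix_apply]
        norm_num
      have hr : (M.submatrix ![0,1,2] ![0,1,2]).rank = 3 := by
        rw [Matrix.rank_of_isUnit _ ((Matrix.isUnit_iff_isUnit_det _).mpr
          (isUnit_iff_ne_zero.mpr (by rw [hd]; norm_num)))]
        simp
      calc (3:ℕ) = (M.submatrix ![0,1,2] ![0,1,2]).rank := hr.symm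
        _ ≤ M.rank := rank_submatrix_le' M _ _
end

section
/- For integers u, v ∈ {0,1,2,3} and a ∈ {0,1,…,9}, writing x̄ = 6−x and ã = 9−a, let M(u,v,a) be the symmetric 6×6 integer matrix with rows (−2,6,u,ū,v̄,v), (6,−2,ū,u,v,v̄), (u,ū,−2,11,ã,a), (ū,u,11,−2,a,ã), (v̄,v,ã,a,−2,11), (v,v̄,a,ã,11,−2). Then M(u,v,a) has rank 3 (over ℚ) if and only if u = 1, v = 1 and a = 9. -/
open Matrix

lemma key_int (u v a : ℤ) (hu0 : 0 ≤ u) (hu3 : u ≤ 3) (hv0 : 0 ≤ v) (hv3 : v ≤ 3)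
    (ha0 : 0 ≤ a) (ha9 : a ≤ 9) (h : ¬(u = 1 ∧ v = 1 ∧ a = 9)) :
    52*u*u + 52*v*v + 32*a*a + 16*u*v*a - 48*a*u - 48*a*v - 72*u*v - 96*u - 96*v - 144*a - 416 ≠ 0 := by
  interval_cases u <;> interval_cases v <;> interval_cases a <;> omega

@[simp] lemma vec_cons_val_five {α : Type*} {m : ℕ} (x : α)
    (u : Fin m.succ.succ.succ.succ.succ → α) :
    vecCons x u 5 = vecHead (vecTail (vecTail (vecTail (vecTail u)))) := rfl

set_option maxHeartbeats 1000000 in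
/-- The intersection matrix `M(u,v,a)` of the six `(−2)`-curves over a `6`-tangent
conic and two cuspidal cubics has rank `3` iff `u = 1, v = 1, a = 9`. -/
theorem stmt_12 (u v a : ℤ)
    (hu0 : 0 ≤ u) (hu3 : u ≤ 3) (hv0 : 0 ≤ v) (hv3 : v ≤ 3)
    (ha0 : 0 ≤ a) (ha9 : a ≤ 9) :
    let M : Matrix (Fin 6) (Fin 6) ℚ :=
      !![-2, 6, (u : ℚ), 6 - u, 6 - v, (v : ℚ);
         6, -2, 6 - u, (u : ℚ), (v : ℚ), 6 - v;
         (u : ℚ), 6 - u, -2, 11, 9 - a, (a : ℚ);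
         6 - u, (u : ℚ), 11, -2, (a : ℚ), 9 - a;
         6 - v, (v : ℚ), 9 - a, (a : ℚ), -2, 11;
         (v : ℚ), 6 - v, (a : ℚ), 9 - a, 11, -2]
    M.rank = 3 ↔ (u = 1 ∧ v = 1 ∧ a = 9) := by
  intro M
  have hM : M = !![-2, 6, (u : ℚ), 6 - u, 6 - v, (v : ℚ);
         6, -2, 6 - u, (u : ℚ), (v : ℚ), 6 - v;
         (u : ℚ), 6 - u, -2, 11, 9 - a, (a : ℚ);
         6 - u, (u : ℚ), 11, -2, (a : ℚ), 9 - a;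
         6 - v, (v : ℚ), 9 - a, (a : ℚ), -2, 11;
         (v : ℚ), 6 - v, (a : ℚ), 9 - a, 11, -2] := rfl
  constructor
  · -- rank = 3 → (u,v,a) = (1,1,9)
    intro hrank
    by_contra hne
    -- the 4×4 submatrix on rows/columns {0,1,2,4} has nonzero determinant
    set P : Matrix (Fin 4) (Fin 6) ℚ :=
      !![1,0,0,0,0,0; 0,1,0,0,0,0; 0,0,1,0,0,0; 0,0,0,0,1,0] with hP
    set Q : Matrix (Fin 6) (Fin 4) ℚ :=
      !![1,0,0,0; 0,1,0,0; 0,0,1,0; 0,0,0,0; 0,0,0,1; 0,0,0,0] with hQ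
    set T : Matrix (Fin 4) (Fin 4) ℚ :=
      !![-2, 6, (u : ℚ), 6 - v;
         6, -2, 6 - u, (v : ℚ);
         (u : ℚ), 6 - u, -2, 9 - a;
         6 - v, (v : ℚ), 9 - a, -2] with hT
    have hTeq : T = P * M * Q := by
      rw [hM, hP, hQ, hT]
      ext i j
      fin_cases i <;> fin_cases j <;>
        simp [Matrix.mul_apply, Fin.sum_univ_succ]
    have hdet : T.det =
        ((52*u*u + 52*v*v + 32*a*a + 16*u*v*a - 48*a*u - 48*a*v - 72*u*v
          - 96*u - 96*v - 144*a - 416 : ℤ) : ℚ) := by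
      rw [hT]
      simp [Matrix.det_succ_row_zero, Fin.sum_univ_succ, Fin.succAbove,
        Fin.castSucc, Fin.castAdd, Fin.castLE]
      push_cast
      ring
    have hdet0 : T.det ≠ 0 := by
      rw [hdet]
      exact_mod_cast key_int u v a hu0 hu3 hv0 hv3 ha0 ha9 hne
    have hrankT : T.rank = 4 := by
      have : IsUnit T := by
        rw [Matrix.isUnit_iff_isUnit_det]
        exact isUnit_iff_ne_zero.mpr hdet0
      simpa using Matrix.rank_of_isUnit T this
    have h4 : (4 : ℕ) ≤ M.rank := by
      calc (4 : ℕ) = T.rank := hrankT.symm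
        _ = (P * (M * Q)).rank := by rw [hTeq, Matrix.mul_assoc]
        _ ≤ (M * Q).rank := Matrix.rank_mul_le_right _ _
        _ ≤ M.rank := Matrix.rank_mul_le_left _ _
    omega
  · -- (u,v,a) = (1,1,9) → rank = 3
    rintro ⟨rfl, rfl, rfl⟩
    refine le_antisymm ?_ ?_
    · -- rank ≤ 3 : factor M = N * K
      set N : Matrix (Fin 6) (Fin 3) ℚ :=
        !![1,0,0; 0,1,0; 0,0,1; 3/2,3/2,-1; -1/2,1/2,1; 2,1,-1] with hN
      set K : Matrix (Fin 3) (Fin 6) ℚ :=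
        !![-2,6,1,5,5,1; 6,-2,5,1,1,5; 1,5,-2,11,0,9] with hK
      have hM1 : M = !![-2,6,1,5,5,1; 6,-2,5,1,1,5; 1,5,-2,11,0,9;
          5,1,11,-2,9,0; 5,1,0,9,-2,11; 1,5,9,0,11,-2] := by
        rw [hM]; norm_num
      have hMNK : M = N * K := by
        rw [hM1, hN, hK]
        ext i j
        fin_cases i <;> fin_cases j <;>
          simp [Matrix.mul_apply, Fin.sum_univ_succ] <;> norm_num
      calc M.rank = (N * K).rank := by rw [hMNK]
        _ ≤ N.rank := Matrix.rank_mul_le_left _ _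
        _ ≤ 3 := Matrix.rank_le_width N
    · -- rank ≥ 3 : the top-left 3×3 minor is 176 ≠ 0
      set P : Matrix (Fin 3) (Fin 6) ℚ :=
        !![1,0,0,0,0,0; 0,1,0,0,0,0; 0,0,1,0,0,0] with hP
      set Q : Matrix (Fin 6) (Fin 3) ℚ :=
        !![1,0,0; 0,1,0; 0,0,1; 0,0,0; 0,0,0; 0,0,0] with hQ
      set T : Matrix (Fin 3) (Fin 3) ℚ := !![-2,6,1; 6,-2,5; 1,5,-2] with hT
      have hM1 : M = !![-2,6,1,5,5,1; 6,-2,5,1,1,5; 1,5,-2,11,0,9;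
          5,1,11,-2,9,0; 5,1,0,9,-2,11; 1,5,9,0,11,-2] := by
        rw [hM]; norm_num
      have hTeq : T = P * M * Q := by
        rw [hM1, hP, hQ, hT]
        ext i j
        fin_cases i <;> fin_cases j <;>
          simp [Matrix.mul_apply, Fin.sum_univ_succ] <;> norm_num
      have hdet0 : T.det ≠ 0 := by
        rw [hT, Matrix.det_fin_three]; simp [Matrix.vecHead, Matrix.vecTail]; norm_num
      have hrankT : T.rank = 3 := by
        have : IsUnit T := by
          rw [Matrix.isUnit_iff_isUnit_det]
          exact isUnit_iff_ne_zero.mpr hdet0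
        simpa using Matrix.rank_of_isUnit T this
      calc (3 : ℕ) = T.rank := hrankT.symm
        _ = (P * (M * Q)).rank := by rw [hTeq, Matrix.mul_assoc]
        _ ≤ (M * Q).rank := Matrix.rank_mul_le_right _ _
        _ ≤ M.rank := Matrix.rank_mul_le_left _ _
end

section
/- Let G = [[−2,3,0,0],[3,−2,1,1],[0,1,−2,1],[0,1,1,−2]]. There exists a matrix U ∈ GL₄(ℤ) (i.e., an integer 4×4 matrix with determinant ±1) such that UᵀGU = [[0,3,0,0],[3,−2,0,0],[0,0,−2,1],[0,0,1,−2]]. -/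
open Matrix

/-- The lattice generated by the `(−2)`-curves `B₁, B₂, B₃, B₅` (case `M₂`,
Vinberg's `L(25)`) is isomorphic to `[[0,3],[3,−2]] ⊕ A₂(−1)`: there is a
unimodular integral change of basis carrying one Gram matrix to the other. -/
theorem stmt_14 :
    ∃ U : Matrix (Fin 4) (Fin 4) ℤ, (U.det = 1 ∨ U.det = -1) ∧
      U.transpose * !![-2, 3, 0, 0; 3, -2, 1, 1; 0, 1, -2, 1; 0, 1, 1, -2] * U =
        !![0, 3, 0, 0; 3, -2, 0, 0; 0, 0, -2, 1; 0, 0, 1, -2] := by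
  refine ⟨!![0,-1,0,0; -1,-1,-1,0; -1,-2,-2,1; -1,0,-1,1], Or.inl ?_, ?_⟩ <;>
    decide
end

section
/- Let G = diag(6,−2,−2) (the Gram matrix of the lattice S₁). For every x ∈ ℚ³, if Gx ∈ ℤ³ and xᵀGx ∈ 2ℤ, then x ∈ ℤ³. -/
open Matrix

private lemma sq_mod4 (u : ℤ) :
    (u % 2 = 0 ∧ u ^ 2 % 4 = 0) ∨ (u % 2 = 1 ∧ u ^ 2 % 4 = 1) := by
  rcases Int.even_or_odd u with ⟨k, hk⟩ | ⟨k, hk⟩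
  · left
    have hsq : u ^ 2 = 4 * k ^ 2 := by subst hk; ring
    have h2 : u = 2 * k := by omega
    generalize k ^ 2 = K at hsq
    omega
  · right
    have hsq : u ^ 2 = 4 * (k ^ 2 + k) + 1 := by subst hk; ring
    generalize k ^ 2 + k = K at hsq
    omega

/-- The discriminant group of the lattice `S₁ = ⟨6⟩ ⊕ ⟨−2⟩ ⊕ ⟨−2⟩` contains no
non-trivial isotropic element: any `x ∈ ℚ³` with `Gx ∈ ℤ³` and `xᵀGx ∈ 2ℤ`
already lies in `ℤ³`. -/
theorem stmt_15 (x : Fin 3 → ℚ)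
    (h1 : ∀ i, ∃ m : ℤ,
      ((!![6, 0, 0; 0, -2, 0; 0, 0, -2] : Matrix (Fin 3) (Fin 3) ℚ) *ᵥ x) i = m)
    (h2 : ∃ m : ℤ,
      x ⬝ᵥ ((!![6, 0, 0; 0, -2, 0; 0, 0, -2] : Matrix (Fin 3) (Fin 3) ℚ) *ᵥ x)
        = 2 * m) :
    ∀ i, ∃ m : ℤ, x i = m := by
  obtain ⟨a, ha⟩ := h1 0
  obtain ⟨b, hb⟩ := h1 1
  obtain ⟨c, hc⟩ := h1 2
  obtain ⟨m, hm⟩ := h2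
  simp [Matrix.mulVec, dotProduct, Fin.sum_univ_three, Matrix.cons_val_zero,
    Matrix.cons_val_one, Matrix.head_cons, Matrix.vecHead, Matrix.vecTail] at ha hb hc hm
  have key : (a : ℚ) ^ 2 - 3 * (b : ℚ) ^ 2 - 3 * (c : ℚ) ^ 2 = 12 * m := by
    rw [← ha, ← hb, ← hc]
    linear_combination 6 * hm
  have keyZ : a ^ 2 - 3 * b ^ 2 - 3 * c ^ 2 = 12 * m := by exact_mod_cast key
  have h3 : (3 : ℤ) ∣ a := by
    have : (3 : ℤ) ∣ a ^ 2 := ⟨b ^ 2 + c ^ 2 + 4 * m, by linarith⟩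
    exact Int.prime_three.dvd_of_dvd_pow this
  obtain ⟨t, ht⟩ := h3
  have keyt : 3 * t ^ 2 - b ^ 2 - c ^ 2 = 4 * m := by
    rw [ht] at keyZ
    have h9 : 3 * (3 * t ^ 2 - b ^ 2 - c ^ 2) = 3 * (4 * m) := by linear_combination keyZ
    exact mul_left_cancel₀ (by norm_num : (3:ℤ) ≠ 0) h9
  have heven : t % 2 = 0 ∧ b % 2 = 0 ∧ c % 2 = 0 := by
    rcases sq_mod4 t with ⟨ht1, ht2⟩ | ⟨ht1, ht2⟩ <;>
    rcases sq_mod4 b with ⟨hb1, hb2⟩ | ⟨hb1, hb2⟩ <;>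
    rcases sq_mod4 c with ⟨hc1, hc2⟩ | ⟨hc1, hc2⟩ <;>
    · generalize t ^ 2 = T at * ; generalize b ^ 2 = B at *
      generalize c ^ 2 = C at * ; omega
  obtain ⟨ht0, hb0, hc0⟩ := heven
  obtain ⟨s, hs⟩ : ∃ s, t = 2 * s := ⟨t / 2, by omega⟩
  obtain ⟨u, hu⟩ : ∃ u, b = 2 * u := ⟨b / 2, by omega⟩
  obtain ⟨v, hv⟩ : ∃ v, c = 2 * v := ⟨c / 2, by omega⟩
  intro i
  fin_cases i
  · refine ⟨s, ?_⟩
    show x 0 = (s : ℚ)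
    have : (a : ℚ) = 6 * s := by rw [ht, hs]; push_cast; ring
    rw [this] at ha; linarith
  · refine ⟨-u, ?_⟩
    show x 1 = ((-u : ℤ) : ℚ)
    have : (b : ℚ) = 2 * u := by rw [hu]; push_cast; ring
    rw [this] at hb; push_cast; linarith
  · refine ⟨-v, ?_⟩
    show x 2 = ((-v : ℤ) : ℚ)
    have : (c : ℚ) = 2 * v := by rw [hv]; push_cast; ring
    rw [this] at hc; push_cast; linarith
end

section
/- Let G = [[−2,1,3],[1,−2,1],[3,1,−2]] (the Gram matrix of the lattice S₄). For every x ∈ ℚ³, if Gx ∈ ℤ³ and xᵀGx ∈ 2ℤ, then x ∈ ℤ³. -/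
open Matrix
lemma aux8_s16 : ∀ a b c : ZMod 8,
    3*a*a - 5*b*b + 3*c*c + 10*a*b + 14*a*c + 10*b*c = 0 →
    2*(3*a+5*b+7*c) = 0 ∧ 2*(5*a-5*b+5*c) = 0 ∧ 2*(7*a+5*b+3*c) = 0 := by decide
lemma aux5_s16 : ∀ a b c : ZMod 5,
    3*a*a - 5*b*b + 3*c*c + 10*a*b + 14*a*c + 10*b*c = 0 →
    (3*a+5*b+7*c) = 0 ∧ (5*a-5*b+5*c) = 0 ∧ (7*a+5*b+3*c) = 0 := by decide
lemma int_div_20 (y : ℤ) (h8 : ((2*y : ℤ) : ZMod 8) = 0) (h5 : ((y : ℤ) : ZMod 5) = 0) :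
    (20 : ℤ) ∣ y := by
  have h4 : (8 : ℤ) ∣ 2*y := (ZMod.intCast_zmod_eq_zero_iff_dvd _ _).mp h8
  have h5' : (5 : ℤ) ∣ y := (ZMod.intCast_zmod_eq_zero_iff_dvd _ _).mp h5
  omega
/-- The discriminant group of the lattice `S₄` contains no non-trivial isotropic
element: any `x ∈ ℚ³` with `Gx ∈ ℤ³` and `xᵀGx ∈ 2ℤ` already lies in `ℤ³`. -/
theorem stmt_16 (x : Fin 3 → ℚ)
    (h1 : ∀ i, ∃ m : ℤ,
      ((!![-2, 1, 3; 1, -2, 1; 3, 1, -2] : Matrix (Fin 3) (Fin 3) ℚ) *ᵥ x) i = m)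
    (h2 : ∃ m : ℤ,
      x ⬝ᵥ ((!![-2, 1, 3; 1, -2, 1; 3, 1, -2] : Matrix (Fin 3) (Fin 3) ℚ) *ᵥ x)
        = 2 * m) :
    ∀ i, ∃ m : ℤ, x i = m := by
  obtain ⟨a, ha⟩ := h1 0
  obtain ⟨b, hb⟩ := h1 1
  obtain ⟨c, hc⟩ := h1 2
  obtain ⟨m, hm⟩ := h2
  simp [mulVec, dotProduct, Fin.sum_univ_three] at ha hb hc hm
  have ea : -2 * x 0 + x 1 + 3 * x 2 = a := by linarith
  have eb : x 0 + -2 * x 1 + x 2 = b := by linarith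
  have ec : 3 * x 0 + x 1 + -2 * x 2 = c := by linarith
  have hx0 : 20 * x 0 = 3*(a:ℚ) + 5*b + 7*c := by linear_combination 3*ea + 5*eb + 7*ec
  have hx1 : 20 * x 1 = 5*(a:ℚ) - 5*b + 5*c := by linear_combination 5*ea - 5*eb + 5*ec
  have hx2 : 20 * x 2 = 7*(a:ℚ) + 5*b + 3*c := by linear_combination 7*ea + 5*eb + 3*ec
  have hq : (3*(a:ℚ)*a - 5*b*b + 3*c*c + 10*a*b + 14*a*c + 10*b*c) = 40 * m := by
    linear_combination (-(a:ℚ)) * hx0 - b * hx1 - c * hx2 - 20 * x 0 * ea - 20 * x 1 * eb - 20 * x 2 * ec + 20 * hm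
  have hqZ : (3*a*a - 5*b*b + 3*c*c + 10*a*b + 14*a*c + 10*b*c : ℤ) = 40 * m := by
    exact_mod_cast hq
  have h8 := aux8_s16 a b c (by
    have := congrArg (fun t : ℤ => (t : ZMod 8)) hqZ
    push_cast at this
    have h40 : (40 : ZMod 8) = 0 := by decide
    linear_combination this + (m : ZMod 8) * h40)
  have h5 := aux5_s16 a b c (by
    have := congrArg (fun t : ℤ => (t : ZMod 5)) hqZ
    push_cast at this
    have h40 : (40 : ZMod 5) = 0 := by decide
    linear_combination this + (m : ZMod 5) * h40)
  intro i
  fin_cases i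
  · obtain ⟨k, hk⟩ := int_div_20 (3*a+5*b+7*c) (by push_cast; linear_combination h8.1) (by push_cast; linear_combination h5.1)
    refine ⟨k, ?_⟩
    have h20 : ((20 * x 0 : ℚ)) = ((20*k : ℤ) : ℚ) := by rw [hx0]; exact_mod_cast congrArg (fun t : ℤ => (t:ℚ)) hk
    push_cast at h20
    show x 0 = (k:ℚ)
    linarith
  · obtain ⟨k, hk⟩ := int_div_20 (5*a-5*b+5*c) (by push_cast; linear_combination h8.2.1) (by push_cast; linear_combination h5.2.1)
    refine ⟨k, ?_⟩
    have h20 : ((20 * x 1 : ℚ)) = ((20*k : ℤ) : ℚ) := by rw [hx1]; exact_mod_cast congrArg (fun t : ℤ => (t:ℚ)) hk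
    push_cast at h20
    show x 1 = (k:ℚ)
    linarith
  · obtain ⟨k, hk⟩ := int_div_20 (7*a+5*b+3*c) (by push_cast; linear_combination h8.2.2) (by push_cast; linear_combination h5.2.2)
    refine ⟨k, ?_⟩
    have h20 : ((20 * x 2 : ℚ)) = ((20*k : ℤ) : ℚ) := by rw [hx2]; exact_mod_cast congrArg (fun t : ℤ => (t:ℚ)) hk
    push_cast at h20
    show x 2 = (k:ℚ)
    linarith
end

section
/- Let G = [[4,0,0],[0,−2,1],[0,1,−2]] (the Gram matrix of the lattice S₅). For every x ∈ ℚ³, if Gx ∈ ℤ³ and xᵀGx ∈ 2ℤ, then x ∈ ℤ³. -/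
open Matrix

/-- The discriminant group of the lattice `S₅` contains no non-trivial isotropic
element: any `x ∈ ℚ³` with `Gx ∈ ℤ³` and `xᵀGx ∈ 2ℤ` already lies in `ℤ³`. -/
theorem stmt_17 (x : Fin 3 → ℚ)
    (h1 : ∀ i, ∃ m : ℤ,
      ((!![4, 0, 0; 0, -2, 1; 0, 1, -2] : Matrix (Fin 3) (Fin 3) ℚ) *ᵥ x) i = m)
    (h2 : ∃ m : ℤ,
      x ⬝ᵥ ((!![4, 0, 0; 0, -2, 1; 0, 1, -2] : Matrix (Fin 3) (Fin 3) ℚ) *ᵥ x)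
        = 2 * m) :
    ∀ i, ∃ m : ℤ, x i = m := by
  obtain ⟨m0, h0⟩ := h1 0
  obtain ⟨m1, hA⟩ := h1 1
  obtain ⟨m2, hB⟩ := h1 2
  obtain ⟨k, hk⟩ := h2
  simp [Matrix.mulVec, dotProduct, Fin.sum_univ_three, Matrix.vecHead, Matrix.vecTail] at h0 hA hB hk
  -- h0 : 4 * x 0 = m0, hA : -2*x 1 + x 2 = m1, hB : x 1 - 2 * x 2 = m2
  -- integer relation
  have key : 3 * m0 ^ 2 - 8 * (m1 ^ 2 + m1 * m2 + m2 ^ 2) = 24 * k := by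
    have : (3 * (m0:ℚ) ^ 2 - 8 * ((m1:ℚ) ^ 2 + m1 * m2 + m2 ^ 2) : ℚ) = 24 * k := by
      linear_combination (-3 * ((m0:ℚ) + 4 * x 0)) * h0
        + 8 * ((m1:ℚ) + (-2 * x 1 + x 2) + m2) * hA
        + 8 * ((-2 * x 1 + x 2) + (m2:ℚ) + (x 1 - 2 * x 2)) * hB + 12 * hk
    exact_mod_cast this
  -- 3 ∣ m1 - m2
  have h3 : (3:ℤ) ∣ m1 - m2 := by
    have : ((m1 - m2 : ℤ) : ZMod 3) ^ 2 = 0 := by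
      have hZ := congrArg (Int.cast : ℤ → ZMod 3) key
      push_cast at hZ ⊢
      have h30 : (3 : ZMod 3) = 0 := by decide
      linear_combination hZ + (-(m0 : ZMod 3) ^ 2 + 3 * m1 ^ 2
        + 2 * m1 * m2 + 3 * m2 ^ 2 + 8 * k) * h30
    have h0' : ((m1 - m2 : ℤ) : ZMod 3) = 0 := by
      have := pow_eq_zero_iff (n := 2) (by norm_num) |>.mp this
      exact this
    exact (ZMod.intCast_zmod_eq_zero_iff_dvd _ 3).mp h0'
  -- 4 ∣ m0
  have h8 : (8:ℤ) ∣ m0 ^ 2 := by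
    have h3m : (8:ℤ) ∣ 3 * m0 ^ 2 := ⟨3 * k + m1 ^ 2 + m1 * m2 + m2 ^ 2, by linarith⟩
    have : m0 ^ 2 = 3 * (3 * m0 ^ 2) - 8 * m0 ^ 2 := by ring
    rw [this]
    exact dvd_sub (Dvd.dvd.mul_left h3m 3) ⟨m0 ^ 2, rfl⟩
  have h4 : (4:ℤ) ∣ m0 := by
    obtain ⟨c, hc⟩ := h8
    have h2m : (2:ℤ) ∣ m0 := by
      have : (2:ℤ) ∣ m0 ^ 2 := ⟨4 * c, by linarith⟩
      exact (Int.Prime.dvd_pow' (by norm_num) this)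
    obtain ⟨n, hn⟩ := h2m
    have h2n : (2:ℤ) ∣ n := by
      have h4c : 4 * n ^ 2 = 8 * c := by subst hn; linear_combination hc
      have : (2:ℤ) ∣ n ^ 2 := ⟨c, by linarith⟩
      exact (Int.Prime.dvd_pow' (by norm_num) this)
    obtain ⟨j, hj⟩ := h2n
    exact ⟨j, by omega⟩
  obtain ⟨j, hj⟩ := h4
  obtain ⟨d, hd⟩ := h3
  intro i
  fin_cases i
  · exact ⟨j, by push_cast [hj] at h0 ⊢; linarith⟩
  · refine ⟨d - m1, ?_⟩
    have : m1 - m2 = 3 * d := hd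
    push_cast
    have hd' : (m1:ℚ) - m2 = 3 * d := by exact_mod_cast this
    linarith
  · refine ⟨-(m2 + d), ?_⟩
    have hd' : (m1:ℚ) - m2 = 3 * d := by exact_mod_cast hd
    push_cast
    linarith
end

section
/- Equip ℤ³ with the bilinear form x·y = xᵀGy, where G = [[−2,1,7],[1,−2,1],[7,1,−2]]. Let g, h : ℤ³ → ℤ³ be the linear maps given (on the standard basis e₁, e₂, e₃) by g(e₁)=e₂, g(e₂)=e₃, g(e₃)=(1,−2,2) and h(e₁)=e₂, h(e₂)=e₁, h(e₃)=(2,−2,1). Then g and h are isometries of the form (i.e., their matrices M satisfy MᵀGM = G), g has order 6, h has order 2, h∘g∘h = g⁻¹, and the subgroup of GL₃(ℤ) generated by g and h is a dihedral group of order 12. -/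
open Matrix

namespace Stmt18Aux

variable {G : Type*} [Group G]

/-- The candidate map `DihedralGroup 6 → G` given `g, h`. -/
def dphi (g h : G) : DihedralGroup 6 → G
  | .r i => g ^ i.val
  | .sr i => (g ^ i.val)⁻¹ * h

theorem key_add (g : G) (hg : orderOf g = 6) (i j : ZMod 6) :
    g ^ (i + j).val = g ^ i.val * g ^ j.val := by
  have hm := pow_mod_orderOf g (i.val + j.val)
  rw [hg] at hm
  rw [ZMod.val_add, hm, pow_add]

theorem key_sub (g : G) (hg : orderOf g = 6) (i j : ZMod 6) :
    g ^ (j - i).val * g ^ i.val = g ^ j.val := by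
  rw [← key_add g hg, sub_add_cancel]

theorem key_comm (g : G) (h : G) (rel : h * g = g⁻¹ * h) (k : ℕ) :
    h * g ^ k = (g ^ k)⁻¹ * h := by
  induction k with
  | zero => simp
  | succ n ih =>
    rw [pow_succ, ← mul_assoc, ih, mul_assoc, rel, ← mul_assoc]
    group

/-- The monoid hom `DihedralGroup 6 →* G` from the dihedral relations. -/
def dhom (g h : G) (hg : orderOf g = 6) (hh2 : h * h = 1) (rel : h * g = g⁻¹ * h) :
    DihedralGroup 6 →* G where
  toFun := dphi g h
  map_one' := by
    rw [DihedralGroup.one_def]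
    show g ^ (0 : ZMod 6).val = 1
    simp
  map_mul' := by
    have B := key_comm g h rel
    rintro (i | i) (j | j)
    · show g ^ (i + j).val = g ^ i.val * g ^ j.val
      exact key_add g hg i j
    · show (g ^ (j - i).val)⁻¹ * h = g ^ i.val * ((g ^ j.val)⁻¹ * h)
      have hs := key_sub g hg i j
      have : g ^ i.val = (g ^ (j - i).val)⁻¹ * g ^ j.val := by
        rw [← hs]; group
      rw [this]; group
    · show (g ^ (i + j).val)⁻¹ * h = (g ^ i.val)⁻¹ * h * g ^ j.val
      rw [mul_assoc, B j.val, key_add g hg]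
      group
    · show g ^ (j - i).val = (g ^ i.val)⁻¹ * h * ((g ^ j.val)⁻¹ * h)
      have hji : g ^ (j - i).val = g ^ j.val * (g ^ i.val)⁻¹ := by
        rw [← key_sub g hg i j]; group
      have hcomm : h * (g ^ j.val)⁻¹ = g ^ j.val * h := by
        have hx := B j.val
        rw [mul_inv_eq_iff_eq_mul, mul_assoc, hx]
        group
      rw [mul_assoc, ← mul_assoc h, hcomm, mul_assoc, hh2, mul_one, hji]
      exact (((Commute.refl g).pow_pow j.val i.val).inv_right).eq

theorem dihedral_main (g h : G) (hg : orderOf g = 6) (hh : orderOf h = 2)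
    (rel : h * g * h = g⁻¹) (hne : ∀ i : ℕ, g ^ i ≠ h) :
    Nat.card (Subgroup.closure ({g, h} : Set G)) = 12 ∧
      Nonempty (Subgroup.closure ({g, h} : Set G) ≃* DihedralGroup 6) := by
  have hh2 : h * h = 1 := by
    have := pow_orderOf_eq_one h
    rwa [hh, pow_two] at this
  have rel' : h * g = g⁻¹ * h := by
    rw [← rel, mul_assoc, hh2, mul_one]
  set φ := dhom g h hg hh2 rel' with hφ
  have φr : ∀ i : ZMod 6, φ (.r i) = g ^ i.val := fun _ => rfl
  have φsr : ∀ i : ZMod 6, φ (.sr i) = (g ^ i.val)⁻¹ * h := fun _ => rfl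
  have hgmem : g ∈ Subgroup.closure ({g, h} : Set G) :=
    Subgroup.subset_closure (by simp)
  have hhmem : h ∈ Subgroup.closure ({g, h} : Set G) :=
    Subgroup.subset_closure (by simp)
  have hrange : φ.range = Subgroup.closure ({g, h} : Set G) := by
    apply le_antisymm
    · rintro x ⟨y, rfl⟩
      rcases y with i | i
      · rw [φr]; exact pow_mem hgmem _
      · rw [φsr]; exact mul_mem (inv_mem (pow_mem hgmem _)) hhmem
    · rw [Subgroup.closure_le]
      rintro x (rfl | rfl)
      · have h1 : (1 : ZMod 6).val = 1 := rfl
        exact ⟨.r 1, by rw [φr, h1, pow_one]⟩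
      · exact ⟨.sr 0, by rw [φsr]; simp⟩
  have hinj : Function.Injective φ := by
    rw [injective_iff_map_eq_one]
    rintro (i | i) ha
    · rw [φr] at ha
      have hdvd := orderOf_dvd_of_pow_eq_one ha
      rw [hg] at hdvd
      have h0 : i.val = 0 := Nat.eq_zero_of_dvd_of_lt hdvd (ZMod.val_lt i)
      rw [DihedralGroup.one_def]
      congr 1
      exact (ZMod.val_eq_zero i).mp h0
    · rw [φsr, inv_mul_eq_one] at ha
      exact absurd ha (hne _)
  have e : Subgroup.closure ({g, h} : Set G) ≃* DihedralGroup 6 :=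
    (MulEquiv.subgroupCongr hrange).symm.trans (MonoidHom.ofInjective hinj).symm
  refine ⟨?_, ⟨e⟩⟩
  rw [Nat.card_congr e.toEquiv, Nat.card_eq_fintype_card, DihedralGroup.card]

end Stmt18Aux

/-- The explicit elements of `GL₃(ℤ)`. -/
def ggl18 : GL (Fin 3) ℤ :=
  ⟨!![0,0,1;1,0,-2;0,1,2], !![2,1,0;-2,0,1;1,0,0], by decide, by decide⟩

def hgl18 : GL (Fin 3) ℤ :=
  ⟨!![0,1,2;1,0,-2;0,0,1], !![0,1,2;1,0,-2;0,0,1], by decide, by decide⟩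

theorem ggl18_pow_ne (i : ℕ) : ggl18 ^ i ≠ hgl18 := by
  intro hih
  have h1 : ((ggl18 : Matrix (Fin 3) (Fin 3) ℤ)) ^ i = (hgl18 : Matrix (Fin 3) (Fin 3) ℤ) := by
    rw [← Units.val_pow_eq_pow_val, hih]
  have h2 := congrArg Matrix.det h1
  rw [Matrix.det_pow] at h2
  have hgd : (ggl18 : Matrix (Fin 3) (Fin 3) ℤ).det = 1 := by
    show (!![0,0,1;1,0,-2;0,1,2] : Matrix (Fin 3) (Fin 3) ℤ).det = 1
    decide
  have hhd : (hgl18 : Matrix (Fin 3) (Fin 3) ℤ).det = -1 := by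
    show (!![0,1,2;1,0,-2;0,0,1] : Matrix (Fin 3) (Fin 3) ℤ).det = -1
    decide
  rw [hgd, hhd, one_pow] at h2
  norm_num at h2

/-- The isometries `g, h` of the lattice `S₂` permuting the hexagon of six
`(−2)`-classes: `g` has order `6`, `h` has order `2`, `hgh = g⁻¹`, and they
generate a dihedral subgroup of `GL₃(ℤ)` of order `12`. The matrices `Mg, Mh`
(acting by `v ↦ M *ᵥ v`) send `e₁ ↦ e₂, e₂ ↦ e₃, e₃ ↦ (1,−2,2)` and
`e₁ ↦ e₂, e₂ ↦ e₁, e₃ ↦ (2,−2,1)` respectively. -/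
theorem stmt_18 :
    let G : Matrix (Fin 3) (Fin 3) ℤ := !![-2, 1, 7; 1, -2, 1; 7, 1, -2]
    let Mg : Matrix (Fin 3) (Fin 3) ℤ := !![0, 0, 1; 1, 0, -2; 0, 1, 2]
    let Mh : Matrix (Fin 3) (Fin 3) ℤ := !![0, 1, 2; 1, 0, -2; 0, 0, 1]
    Mg.transpose * G * Mg = G ∧ Mh.transpose * G * Mh = G ∧
    ∃ g h : GL (Fin 3) ℤ,
      (↑g : Matrix (Fin 3) (Fin 3) ℤ) = Mg ∧
      (↑h : Matrix (Fin 3) (Fin 3) ℤ) = Mh ∧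
      orderOf g = 6 ∧ orderOf h = 2 ∧ h * g * h = g⁻¹ ∧
      Nat.card (Subgroup.closure ({g, h} : Set (GL (Fin 3) ℤ))) = 12 ∧
      Nonempty ((Subgroup.closure ({g, h} : Set (GL (Fin 3) ℤ))) ≃* DihedralGroup 6) := by
  intro G Mg Mh
  have hg : orderOf ggl18 = 6 :=
    (orderOf_eq_iff (by norm_num)).mpr ⟨by decide, by decide⟩
  have hh : orderOf hgl18 = 2 :=
    (orderOf_eq_iff (by norm_num)).mpr ⟨by decide, by decide⟩
  have rel : hgl18 * ggl18 * hgl18 = ggl18⁻¹ := by decide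
  obtain ⟨hcard, hiso⟩ :=
    Stmt18Aux.dihedral_main ggl18 hgl18 hg hh rel ggl18_pow_ne
  exact ⟨by decide, by decide, ggl18, hgl18, rfl, rfl, hg, hh, rel, hcard, hiso⟩
end
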